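/- arXiv:0705.1375 — 4 statements merged into one kernel-verified Lean document; each statement's English description precedes it below -/
import Mathlib

section
/- Define ⟨p,q⟩ for 0 ≤ p ≤ q by the double sum ⟨p,q⟩ = Σ_{h=0}^{p+q} 2^h Σ_{h₁+h₂=h, h₁≤p≤q−h₂, h₁,h₂≥0} C(p+q−h, p−h₁)·((q−h₂)−(p−h₁)+1)/((q−h₂)+1). Then ⟨p,q⟩ also equals Σ_{j=p+1}^{q+1} C(p+q+1, j). -/
/-- `⟨p,q⟩ = C(p+q+1,p+1) + ⋯ + C(p+q+1,q+1)`. -/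
def bracket (p q : ℕ) : ℕ :=
  ∑ j ∈ Finset.Icc (p + 1) (q + 1), Nat.choose (p + q + 1) j

open Finset

/-- Ballot-type number as a rational: `C(a+b,a) - C(a+b,b+1)`. -/
private def D (a b : ℕ) : ℚ :=
  (Nat.choose (a + b) a : ℚ) - (Nat.choose (a + b) (b + 1) : ℚ)

private lemma ratio (a b : ℕ) :
    (Nat.choose (a + b) a : ℚ) * ((b : ℚ) - a + 1) / ((b : ℚ) + 1) = D a b := by
  have hsymm : Nat.choose (a + b) b = Nat.choose (a + b) a := by
    rw [← Nat.choose_symm (Nat.le_add_right a b)]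
    congr 1
    omega
  have key : Nat.choose (a + b) (b + 1) * (b + 1) = Nat.choose (a + b) a * a := by
    rw [Nat.choose_succ_right_eq, hsymm]
    congr 1
    omega
  have keyQ : (Nat.choose (a + b) (b + 1) : ℚ) * ((b : ℚ) + 1)
      = (Nat.choose (a + b) a : ℚ) * a := by exact_mod_cast key
  have hb : ((b : ℚ) + 1) ≠ 0 := by positivity
  rw [div_eq_iff hb, D]
  linear_combination keyQ

private lemma Tlem (q : ℕ) : ∀ p : ℕ,
    ∑ a ∈ range (p + 1), (2 : ℚ) ^ (p - a) * D a q = (Nat.choose (p + q + 1) p : ℚ) := by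
  intro p
  induction p with
  | zero => simp [D, Nat.choose_eq_zero_of_lt]
  | succ p ih =>
    rw [Finset.sum_range_succ]
    have h1 : ∀ a ∈ range (p + 1),
        (2 : ℚ) ^ (p + 1 - a) * D a q = 2 * ((2 : ℚ) ^ (p - a) * D a q) := by
      intro a ha
      rw [mem_range] at ha
      rw [show p + 1 - a = (p - a) + 1 by omega, pow_succ]
      ring
    rw [Finset.sum_congr rfl h1, ← Finset.mul_sum, ih]
    have hsymmQ : (Nat.choose (p + q + 1) (q + 1) : ℚ) = (Nat.choose (p + q + 1) p : ℚ) := by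
      have : Nat.choose (p + q + 1) (q + 1) = Nat.choose (p + q + 1) p := by
        rw [← Nat.choose_symm (by omega : q + 1 ≤ p + q + 1)]
        congr 1
        omega
      exact_mod_cast this
    have hpascalQ : (Nat.choose (p + q + 1 + 1) (p + 1) : ℚ)
        = (Nat.choose (p + q + 1) p : ℚ) + (Nat.choose (p + q + 1) (p + 1) : ℚ) := by
      exact_mod_cast Nat.choose_succ_succ (p + q + 1) p
    simp only [D, Nat.sub_self, pow_zero, one_mul]
    rw [show p + 1 + q = p + q + 1 by omega, hsymmQ]
    linear_combination -hpascalQ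

private lemma Slem (p : ℕ) : ∀ m : ℕ,
    ∑ a ∈ range (p + 1), ∑ c ∈ range (m + 1),
        (2 : ℚ) ^ ((p - a) + (m - c)) * D a (p + c)
      = ∑ i ∈ range (m + 1), (Nat.choose (2 * p + m + 1) (p + 1 + i) : ℚ) := by
  intro m
  induction m with
  | zero =>
    simp only [zero_add, Finset.sum_range_one, Nat.sub_zero, Nat.add_zero]
    rw [Tlem p p]
    have : Nat.choose (p + p + 1) p = Nat.choose (2 * p + 0 + 1) (p + 1 + 0) := by
      rw [← Nat.choose_symm (by omega : p ≤ p + p + 1)]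
      congr 1 <;> omega
    exact_mod_cast congrArg (fun n : ℕ => (n : ℚ)) this
  | succ m ih =>
    have hsplit : ∀ a : ℕ, ∑ c ∈ range (m + 1 + 1),
        (2 : ℚ) ^ ((p - a) + (m + 1 - c)) * D a (p + c)
        = 2 * (∑ c ∈ range (m + 1), (2 : ℚ) ^ ((p - a) + (m - c)) * D a (p + c))
          + (2 : ℚ) ^ (p - a) * D a (p + (m + 1)) := by
      intro a
      rw [Finset.sum_range_succ, Finset.mul_sum]
      congr 1
      · apply Finset.sum_congr rfl
        intro c hc
        rw [mem_range] at hc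
        rw [show (p - a) + (m + 1 - c) = ((p - a) + (m - c)) + 1 by omega, pow_succ]
        ring
      · rw [show m + 1 - (m + 1) = 0 by omega, Nat.add_zero]
    calc ∑ a ∈ range (p + 1), ∑ c ∈ range (m + 1 + 1),
            (2 : ℚ) ^ ((p - a) + (m + 1 - c)) * D a (p + c)
        = 2 * (∑ a ∈ range (p + 1), ∑ c ∈ range (m + 1),
              (2 : ℚ) ^ ((p - a) + (m - c)) * D a (p + c))
            + ∑ a ∈ range (p + 1), (2 : ℚ) ^ (p - a) * D a (p + (m + 1)) := by
          rw [Finset.mul_sum, ← Finset.sum_add_distrib]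
          exact Finset.sum_congr rfl fun a _ => hsplit a
      _ = 2 * (∑ i ∈ range (m + 1), (Nat.choose (2 * p + m + 1) (p + 1 + i) : ℚ))
            + (Nat.choose (2 * p + m + 2) p : ℚ) := by
          rw [ih, Tlem (p + (m + 1)) p,
            show p + (p + (m + 1)) + 1 = 2 * p + m + 2 by omega]
      _ = ∑ i ∈ range (m + 1 + 1), (Nat.choose (2 * p + (m + 1) + 1) (p + 1 + i) : ℚ) := by
          have hpas : ∀ i : ℕ, Nat.choose (2 * p + m + 2) (p + 1 + i)
              = Nat.choose (2 * p + m + 1) (p + i) + Nat.choose (2 * p + m + 1) (p + 1 + i) := by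
            intro i
            rw [show 2 * p + m + 2 = (2 * p + m + 1) + 1 by omega,
              show p + 1 + i = (p + i) + 1 by omega]
            exact Nat.choose_succ_succ _ _
          have h2 : ∑ i ∈ range (m + 2), (Nat.choose (2 * p + m + 2) (p + 1 + i) : ℚ)
              = ∑ i ∈ range (m + 2), ((Nat.choose (2 * p + m + 1) (p + i) : ℚ)
                + (Nat.choose (2 * p + m + 1) (p + 1 + i) : ℚ)) := by
            apply Finset.sum_congr rfl
            intro i _
            exact_mod_cast congrArg (fun n : ℕ => (n : ℚ)) (hpas i)
          rw [show 2 * p + (m + 1) + 1 = 2 * p + m + 2 by omega,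
            show m + 1 + 1 = m + 2 by omega, h2, Finset.sum_add_distrib]
          rw [Finset.sum_range_succ' (fun i => (Nat.choose (2 * p + m + 1) (p + i) : ℚ)) (m + 1),
            Finset.sum_range_succ (fun i => (Nat.choose (2 * p + m + 1) (p + 1 + i) : ℚ)) (m + 1)]
          have hlast : Nat.choose (2 * p + m + 2) p
              = Nat.choose (2 * p + m + 1) (p + 0)
                + Nat.choose (2 * p + m + 1) (p + 1 + (m + 1)) := by
            cases p with
            | zero => simp [Nat.choose_eq_zero_of_lt]
            | succ n =>
              have hz : Nat.choose (2 * (n + 1) + m + 1) (n + 1 + 1 + (m + 1))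
                  = Nat.choose (2 * (n + 1) + m + 1) n := by
                rw [← Nat.choose_symm (by omega : n + 1 + 1 + (m + 1) ≤ 2 * (n + 1) + m + 1)]
                congr 1
                omega
              rw [Nat.add_zero, hz,
                show 2 * (n + 1) + m + 2 = (2 * (n + 1) + m + 1) + 1 by omega,
                show n + 1 = n + 1 by rfl]
              rw [Nat.choose_succ_succ']
              omega
          have hlastQ : (Nat.choose (2 * p + m + 2) p : ℚ)
              = (Nat.choose (2 * p + m + 1) (p + 0) : ℚ)
                + (Nat.choose (2 * p + m + 1) (p + 1 + (m + 1)) : ℚ) := by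
            exact_mod_cast hlast
          have hsame : ∀ i ∈ range (m + 1),
              (Nat.choose (2 * p + m + 1) (p + (i + 1)) : ℚ)
              = (Nat.choose (2 * p + m + 1) (p + 1 + i) : ℚ) := by
            intro i _
            congr 2
            omega
          rw [Finset.sum_congr rfl hsame, hlastQ]
          ring

private lemma bracket_eq (p m : ℕ) :
    (bracket p (p + m) : ℚ)
      = ∑ i ∈ range (m + 1), (Nat.choose (2 * p + m + 1) (p + 1 + i) : ℚ) := by
  unfold bracket
  push_cast
  apply Finset.sum_nbij' (fun j => j - (p + 1)) (fun i => p + 1 + i)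
  · intro j hj
    rw [mem_Icc] at hj
    rw [mem_range]
    omega
  · intro i hi
    rw [mem_range] at hi
    rw [mem_Icc]
    omega
  · intro j hj
    rw [mem_Icc] at hj
    omega
  · intro i _
    omega
  · intro j hj
    rw [mem_Icc] at hj
    congr 2 <;> omega

/-- Formula (4.11) of the paper equals the closed form of Proposition 4.7:
`Σ_{h=0}^{p+q} 2^h Σ_{h₁+h₂=h, h₁≤p≤q−h₂} C(p+q−h, p−h₁)·((q−h₂)−(p−h₁)+1)/((q−h₂)+1)
  = ⟨p,q⟩`. -/
theorem stmt_8 (p q : ℕ) (hpq : p ≤ q) :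
    ∑ h ∈ Finset.range (p + q + 1), (2 : ℚ) ^ h *
      ∑ h₁ ∈ (Finset.range (h + 1)).filter (fun h₁ => h₁ ≤ p ∧ p + (h - h₁) ≤ q),
        (Nat.choose (p + q - h) (p - h₁) : ℚ) *
          (((q : ℚ) - (h - h₁)) - ((p : ℚ) - h₁) + 1) / (((q : ℚ) - (h - h₁)) + 1)
    = (bracket p q : ℚ) := by
  obtain ⟨m, rfl⟩ : ∃ m, q = p + m := ⟨q - p, by omega⟩
  rw [bracket_eq, ← Slem]
  simp only [Finset.mul_sum]
  rw [Finset.sum_sigma', Finset.sum_sigma']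
  apply Finset.sum_nbij' (fun x => ⟨p - x.2, m - (x.1 - x.2)⟩)
      (fun y => (⟨(p - y.1) + (m - y.2), p - y.1⟩ : (_ : ℕ) × ℕ))
  · rintro ⟨h, h₁⟩ hx
    simp only [Finset.mem_sigma, Finset.mem_range, Finset.mem_filter] at hx ⊢
    omega
  · rintro ⟨a, c⟩ hy
    simp only [Finset.mem_sigma, Finset.mem_range, Finset.mem_filter] at hy ⊢
    omega
  · rintro ⟨h, h₁⟩ hx
    simp only [Finset.mem_sigma, Finset.mem_range, Finset.mem_filter] at hx
    have e1 : p - (p - h₁) = h₁ := by omega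
    have e2 : m - (m - (h - h₁)) = h - h₁ := by omega
    simp only [e1, e2]
    rw [show h₁ + (h - h₁) = h by omega]
  · rintro ⟨a, c⟩ hy
    simp only [Finset.mem_sigma, Finset.mem_range, Finset.mem_filter] at hy
    have e1 : p - (p - a) = a := by omega
    have e2 : (p - a) + (m - c) - (p - a) = m - c := by omega
    have e3 : m - (m - c) = c := by omega
    simp only [e1, e2, e3]
  · rintro ⟨h, h₁⟩ hx
    simp only [Finset.mem_sigma, Finset.mem_range, Finset.mem_filter] at hx
    obtain ⟨hh, hh1, hle, hcond⟩ := hx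
    obtain ⟨d, rfl⟩ : ∃ d, h = h₁ + d := ⟨h - h₁, by omega⟩
    obtain ⟨a, rfl⟩ : ∃ a, p = h₁ + a := ⟨p - h₁, by omega⟩
    obtain ⟨c, rfl⟩ : ∃ c, m = d + c := ⟨m - d, by omega⟩
    have r1 : h₁ + a - h₁ = a := by omega
    have r2 : h₁ + d - h₁ = d := by omega
    have r3 : d + c - d = c := by omega
    have r4 : h₁ + a - a = h₁ := by omega
    have r5 : h₁ + a + (h₁ + a + (d + c)) - (h₁ + d) = a + (h₁ + a + c) := by omega
    have r6 : d + c - c = d := by omega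
    simp only [r1, r2, r3, r4, r5, r6]
    rw [← ratio a (h₁ + a + c)]
    push_cast
    ring
end

section
/- Let 𝔸 = (a₁,…,a_m) and 𝔹 = (b₁,…,b_n) be alphabets of independent variables. Then the supersymmetric Schur function S_{(n^m)}(𝔸−𝔹) indexed by the m×n rectangle equals the resultant R(𝔸,𝔹) = Π_{i=1}^{m} Π_{j=1}^{n} (a_i − b_j). -/
open PowerSeries MvPolynomial

/-- `Π_{m ∈ M} (1 − m·z)`. -/
noncomputable def prodOneSub {R : Type*} [CommRing R] (M : Multiset R) : PowerSeries R :=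
  (M.map fun m => (1 : PowerSeries R) - PowerSeries.C m * PowerSeries.X).prod

/-- The supersymmetric complete function `h_k(𝔸−𝔹)`, the `k`-th coefficient of
`Π_{b∈𝔹}(1−bz) / Π_{a∈𝔸}(1−az)`. -/
noncomputable def hAB {R : Type*} [CommRing R] (A B : Multiset R) (k : ℕ) : R :=
  PowerSeries.coeff k (prodOneSub B * (prodOneSub A).invOfUnit 1)

/-- `h_k(𝔸−𝔹)` extended by `0` to negative integer indices. -/
noncomputable def hABz {R : Type*} [CommRing R] (A B : Multiset R) (k : ℤ) : R :=
  if k < 0 then 0 else hAB A B k.toNat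

/-- The supersymmetric Schur function `S_I(𝔸−𝔹) = det( h_{i_p+p−q}(𝔸−𝔹) )_{1≤p,q≤h}`,
for a partition `I` with `h` parts (written in weakly increasing order). -/
noncomputable def schurAB {R : Type*} [CommRing R] (A B : Multiset R) {h : ℕ}
    (I : Fin h → ℕ) : R :=
  Matrix.det (Matrix.of fun p q : Fin h =>
    hABz A B ((I p : ℤ) + (p : ℕ) - (q : ℕ)))

noncomputable def geomPS {K : Type*} [CommRing K] (a : K) : PowerSeries K :=
  PowerSeries.mk fun k => a ^ k

lemma geomPS_mul {K : Type*} [CommRing K] (a : K) :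
    ((1 : PowerSeries K) - PowerSeries.C a * PowerSeries.X) * geomPS a = 1 := by
  ext k
  rcases k with _ | k
  · simp [geomPS]
  · simp only [sub_mul, one_mul, map_sub, mul_assoc]
    rw [PowerSeries.coeff_C_mul, PowerSeries.coeff_succ_X_mul]
    simp [geomPS, PowerSeries.coeff_mk, pow_succ, mul_comm]

-- Lagrange vanishing
lemma lagrange_vanish {K : Type*} [Field K] {m : ℕ} (a : Fin m → K)
    (ha : Function.Injective a) (g : Polynomial K) (hg : g.natDegree + 2 ≤ m) :
    ∑ i, g.eval (a i) * (∏ l ∈ Finset.univ.erase i, (a i - a l))⁻¹ = 0 := by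
  classical
  have hinj : Set.InjOn a (Finset.univ : Finset (Fin m)) := fun x _ y _ h => ha h
  have hcard : (Finset.univ : Finset (Fin m)).card = m := Finset.card_univ.trans (Fintype.card_fin m)
  have hdeg : g.degree < ((Finset.univ : Finset (Fin m)).card : ℕ) := by
    rw [hcard]
    calc g.degree ≤ (g.natDegree : WithBot ℕ) := Polynomial.degree_le_natDegree
    _ < (m : ℕ) := by exact_mod_cast Nat.lt_of_lt_of_le (by omega) le_rfl
  have hrep := Lagrange.eq_interpolate (v := a) hinj hdeg
  have hco : g.coeff (m - 1) = 0 := by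
    apply Polynomial.coeff_eq_zero_of_natDegree_lt; omega
  rw [hrep] at hco
  rw [Lagrange.interpolate_apply] at hco
  rw [Polynomial.finset_sum_coeff] at hco
  rw [← hco]
  apply Finset.sum_congr rfl
  intro i _
  rw [Polynomial.coeff_C_mul]
  congr 1
  -- coeff (m-1) of basis = leading coeff
  have hb : (Lagrange.basis Finset.univ a i).natDegree = m - 1 := by
    rw [Lagrange.natDegree_basis hinj (Finset.mem_univ i), hcard]
  rw [← hb, Polynomial.coeff_natDegree]
  unfold Lagrange.basis
  rw [Polynomial.leadingCoeff_prod]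
  rw [← Finset.prod_inv_distrib]
  apply Finset.prod_congr rfl
  intro l hl
  have hne : a i ≠ a l := by
    intro h
    exact (Finset.mem_erase.mp hl).1 (ha h).symm
  unfold Lagrange.basisDivisor
  rw [Polynomial.leadingCoeff_mul, Polynomial.leadingCoeff_C, Polynomial.leadingCoeff_X_sub_C,
    mul_one]

section Field

variable {K : Type*} [Field K] {m n : ℕ}

noncomputable def cAB (a : Fin m → K) (b : Fin n → K) (i : Fin m) : K :=
  a i ^ ((m : ℤ) - 1 - n) * ((∏ j, (a i - b j)) *
    (∏ l ∈ Finset.univ.erase i, (a i - a l))⁻¹)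

lemma prodOneSub_map {R : Type*} [CommRing R] {m : ℕ} (a : Fin m → R) :
    prodOneSub (Finset.univ.val.map a) =
      ((∏ i, (1 - Polynomial.C (a i) * Polynomial.X) : Polynomial R) : PowerSeries R) := by
  unfold prodOneSub
  rw [Multiset.map_map, ← Polynomial.coeToPowerSeries.ringHom_apply, map_prod,
    Finset.prod_eq_multiset_prod]
  congr 1
  apply Multiset.map_congr rfl
  intro i _
  show (1 : PowerSeries R) - PowerSeries.C (a i) * PowerSeries.X
      = Polynomial.coeToPowerSeries.ringHom (1 - Polynomial.C (a i) * Polynomial.X)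
  rw [map_sub, map_one, map_mul, Polynomial.coeToPowerSeries.ringHom_apply,
    Polynomial.coeToPowerSeries.ringHom_apply, Polynomial.coe_C, Polynomial.coe_X]

lemma constantCoeff_prodOneSub {R : Type*} [CommRing R] (M : Multiset R) :
    PowerSeries.constantCoeff (prodOneSub M) = 1 := by
  unfold prodOneSub
  rw [map_multiset_prod, Multiset.map_map]
  apply Multiset.prod_eq_one
  intro x hx
  rcases Multiset.mem_map.mp hx with ⟨r, _, rfl⟩
  simp

lemma prodOneSub_mul_inv {R : Type*} [CommRing R] (M : Multiset R) :
    prodOneSub M * (prodOneSub M).invOfUnit 1 = 1 :=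
  PowerSeries.mul_invOfUnit _ 1 (by rw [constantCoeff_prodOneSub]; rfl)

lemma prod_one_sub_inv_eval {ι : Type*} (s : Finset ι) (v : ι → K) (x : K) (hx : x ≠ 0) :
    ∏ l ∈ s, (1 - v l * x⁻¹) = x⁻¹ ^ s.card * ∏ l ∈ s, (x - v l) := by
  rw [← Finset.prod_const, ← Finset.prod_mul_distrib]
  apply Finset.prod_congr rfl
  intro l _
  rw [mul_sub, inv_mul_cancel₀ hx]
  ring

lemma hAB_eq (a : Fin m → K) (b : Fin n → K) (ha : Function.Injective a)
    (h0 : ∀ i, a i ≠ 0) (k : ℕ) (hk : (n : ℤ) + 1 ≤ (k : ℤ) + m) :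
    hAB (Finset.univ.val.map a) (Finset.univ.val.map b) k = ∑ i, cAB a b i * a i ^ k := by
  classical
  set Pp : Polynomial K := ∏ i, (1 - Polynomial.C (a i) * Polynomial.X) with hPp
  set Qp : Polynomial K := ∏ j, (1 - Polynomial.C (b j) * Polynomial.X) with hQp
  have hΔ : ∀ i, (∏ l ∈ Finset.univ.erase i, (a i - a l)) ≠ 0 := by
    intro i
    rw [Finset.prod_ne_zero_iff]
    intro l hl
    exact sub_ne_zero.mpr fun h => (Finset.mem_erase.mp hl).1 (ha h).symm
  set W : Polynomial K := Qp - ∑ i, Polynomial.C (cAB a b i) *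
    ∏ l ∈ Finset.univ.erase i, (1 - Polynomial.C (a l) * Polynomial.X) with hW
  -- roots of W at (a i)⁻¹
  have hroot : ∀ i, W.eval (a i)⁻¹ = 0 := by
    intro i
    have hm1 : 1 ≤ m := Nat.pos_of_ne_zero (by rintro rfl; exact i.elim0)
    rw [hW, Polynomial.eval_sub, Polynomial.eval_finset_sum, sub_eq_zero]
    have hQev : Qp.eval (a i)⁻¹ = (a i)⁻¹ ^ n * ∏ j, (a i - b j) := by
      rw [hQp, Polynomial.eval_prod]
      have := prod_one_sub_inv_eval (Finset.univ : Finset (Fin n)) b (a i) (h0 i)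
      simpa using this
    have hDev : Polynomial.eval (a i)⁻¹
        (∏ l ∈ Finset.univ.erase i, (1 - Polynomial.C (a l) * Polynomial.X))
        = (a i)⁻¹ ^ (m - 1) * ∏ l ∈ Finset.univ.erase i, (a i - a l) := by
      rw [Polynomial.eval_prod]
      have := prod_one_sub_inv_eval (Finset.univ.erase i) a (a i) (h0 i)
      simpa [Finset.card_erase_of_mem (Finset.mem_univ i)] using this
    have hsum : ∀ i' ∈ Finset.univ, i' ≠ i → Polynomial.eval (a i)⁻¹ (Polynomial.C (cAB a b i') *
        ∏ l ∈ Finset.univ.erase i', (1 - Polynomial.C (a l) * Polynomial.X)) = 0 := by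
      intro i' _ hne
      rw [Polynomial.eval_mul, Polynomial.eval_prod]
      apply mul_eq_zero_of_right
      apply Finset.prod_eq_zero (Finset.mem_erase.mpr ⟨Ne.symm hne, Finset.mem_univ i⟩)
      simp [mul_inv_cancel₀ (h0 i)]
    rw [Finset.sum_eq_single i (fun i' h1 h2 => hsum i' h1 h2) (by simp)]
    rw [Polynomial.eval_mul, Polynomial.eval_C, hDev, hQev]
    unfold cAB
    have hzp : a i ^ ((m : ℤ) - 1 - n) = a i ^ (m - 1) * (a i ^ n)⁻¹ := by
      rw [show (m : ℤ) - 1 - n = ((m - 1 : ℕ) : ℤ) + (-(n : ℤ)) by push_cast; omega]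
      rw [zpow_add₀ (h0 i), zpow_neg, zpow_natCast, zpow_natCast]
    rw [hzp, ← inv_pow]
    set z := (∏ j, (a i - b j))
    set D := (∏ l ∈ Finset.univ.erase i, (a i - a l))
    have h1 : a i ^ (m - 1) * ((a i)⁻¹) ^ (m - 1) = 1 := by
      rw [← mul_pow, mul_inv_cancel₀ (h0 i), one_pow]
    have h2 : D * D⁻¹ = 1 := mul_inv_cancel₀ (hΔ i)
    linear_combination (-(((a i)⁻¹) ^ n * z * (D * D⁻¹))) * h1 + (-(((a i)⁻¹) ^ n * z)) * h2
  -- P divides W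
  have hF : (∏ i, (Polynomial.X - Polynomial.C (a i)⁻¹)) ∣ W := by
    apply Finset.prod_dvd_of_coprime
    · have hinv : Function.Injective fun i => (a i)⁻¹ := fun x y h => ha (inv_injective h)
      exact ((Polynomial.pairwise_coprime_X_sub_C hinv).set_pairwise _)
    · intro i _
      rw [Polynomial.dvd_iff_isRoot]
      exact hroot i
  have hPF : Pp = Polynomial.C (∏ i, (-(a i))) * ∏ i, (Polynomial.X - Polynomial.C (a i)⁻¹) := by
    rw [map_prod, ← Finset.prod_mul_distrib, hPp]
    apply Finset.prod_congr rfl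
    intro i _
    have h1 : Polynomial.C (a i) * Polynomial.C (a i)⁻¹ = 1 := by
      rw [← Polynomial.C_mul, mul_inv_cancel₀ (h0 i), Polynomial.C_1]
    rw [map_neg]
    linear_combination -h1
  have hPdvd : Pp ∣ W := by
    rcases hF with ⟨T, hT⟩
    have hu : (∏ i, (-(a i))) ≠ 0 := by
      rw [Finset.prod_ne_zero_iff]; intro i _; exact neg_ne_zero.mpr (h0 i)
    refine ⟨Polynomial.C (∏ i, (-(a i)))⁻¹ * T, ?_⟩
    rw [hT, hPF]
    have huu : Polynomial.C (∏ i, (-(a i))) * Polynomial.C (∏ i, (-(a i)))⁻¹ = 1 := by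
      rw [← Polynomial.C_mul, mul_inv_cancel₀ hu, Polynomial.C_1]
    linear_combination (-((∏ i, (Polynomial.X - Polynomial.C (a i)⁻¹)) * T)) * huu
  rcases hPdvd with ⟨T, hWT⟩
  -- degree bounds
  have hPne : ∀ i : Fin m, (1 : Polynomial K) - Polynomial.C (a i) * Polynomial.X ≠ 0 := by
    intro i h
    have := congrArg (fun p => Polynomial.coeff p 0) h
    simp at this
  have hPne0 : Pp ≠ 0 := by
    rw [hPp]; exact Finset.prod_ne_zero_iff.mpr fun i _ => hPne i
  have hlin : ∀ c : K, ((1 : Polynomial K) - Polynomial.C c * Polynomial.X)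
      = Polynomial.C (-c) * Polynomial.X + Polynomial.C 1 := by
    intro c; rw [map_neg, Polynomial.C_1]; ring
  have hPdeg : Pp.natDegree = m := by
    rw [hPp, Polynomial.natDegree_prod _ _ fun i _ => hPne i]
    rw [Finset.sum_congr rfl fun i _ => by
      rw [hlin (a i), Polynomial.natDegree_linear (neg_ne_zero.mpr (h0 i))]]
    simp
  have hWdeg : W.natDegree ≤ max n (m - 1) := by
    rw [hW]
    apply le_trans (Polynomial.natDegree_sub_le _ _)
    apply max_le
    · apply le_max_of_le_left
      apply le_trans (Polynomial.natDegree_prod_le _ _)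
      apply le_trans (Finset.sum_le_card_nsmul _ _ 1 ?_)
      · simp
      · intro j _
        rw [hlin (b j)]
        exact Polynomial.natDegree_linear_le
    · apply le_max_of_le_right
      apply Polynomial.natDegree_sum_le_of_forall_le
      intro i _
      apply le_trans (Polynomial.natDegree_mul_le)
      rw [Polynomial.natDegree_C, zero_add]
      apply le_trans (Polynomial.natDegree_prod_le _ _)
      apply le_trans (Finset.sum_le_card_nsmul _ _ 1 ?_)
      · simp [Finset.card_erase_of_mem]
      · intro l _
        rw [hlin (a l)]
        exact Polynomial.natDegree_linear_le
  have hTcoeff : T.coeff k = 0 := by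
    by_cases hT0 : T = 0
    · simp [hT0]
    apply Polynomial.coeff_eq_zero_of_natDegree_lt
    have hnd := Polynomial.natDegree_mul hPne0 hT0
    rw [← hWT, hPdeg] at hnd
    have h3 : W.natDegree ≤ n ∨ W.natDegree ≤ m - 1 := le_max_iff.mp hWdeg
    omega
  -- power series identity
  set U := (prodOneSub (Finset.univ.val.map a)).invOfUnit 1 with hU
  have hPU : ((Pp : Polynomial K) : PowerSeries K) * U = 1 := by
    rw [← prodOneSub_map a, prodOneSub_mul_inv]
  have hgeom : ∀ i : Fin m,
      ((∏ l ∈ Finset.univ.erase i, (1 - Polynomial.C (a l) * Polynomial.X) : Polynomial K) :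
        PowerSeries K) * U = geomPS (a i) := by
    intro i
    have hsplit : ((Pp : Polynomial K) : PowerSeries K) =
        ((1 : PowerSeries K) - PowerSeries.C (a i) * PowerSeries.X) *
        ((∏ l ∈ Finset.univ.erase i, (1 - Polynomial.C (a l) * Polynomial.X) : Polynomial K) :
          PowerSeries K) := by
      rw [hPp, ← Finset.mul_prod_erase _ _ (Finset.mem_univ i)]
      push_cast
      ring
    calc ((∏ l ∈ Finset.univ.erase i, (1 - Polynomial.C (a l) * Polynomial.X) : Polynomial K) :
          PowerSeries K) * U
        = (((1 : PowerSeries K) - PowerSeries.C (a i) * PowerSeries.X) * geomPS (a i)) *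
          (((∏ l ∈ Finset.univ.erase i, (1 - Polynomial.C (a l) * Polynomial.X) : Polynomial K) :
          PowerSeries K) * U) := by rw [geomPS_mul]; rw [one_mul]
      _ = geomPS (a i) * (((Pp : Polynomial K) : PowerSeries K) * U) := by rw [hsplit]; ring
      _ = geomPS (a i) := by rw [hPU, mul_one]
  have hkey : prodOneSub (Finset.univ.val.map b) * U =
      ((T : Polynomial K) : PowerSeries K) + ∑ i, PowerSeries.C (cAB a b i) * geomPS (a i) := by
    have hQW : (Qp : Polynomial K) = Pp * T + ∑ i, Polynomial.C (cAB a b i) *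
        ∏ l ∈ Finset.univ.erase i, (1 - Polynomial.C (a l) * Polynomial.X) := by
      rw [← hWT, hW]; ring
    rw [prodOneSub_map b, ← hQp, hQW]
    push_cast
    rw [← Polynomial.coeToPowerSeries.ringHom_apply
      (φ := ∑ i, Polynomial.C (cAB a b i) *
        ∏ l ∈ Finset.univ.erase i, (1 - Polynomial.C (a l) * Polynomial.X)), map_sum]
    rw [add_mul, Finset.sum_mul]
    congr 1
    · rw [mul_comm ((Pp : Polynomial K) : PowerSeries K) _, mul_assoc, hPU, mul_one]
    · apply Finset.sum_congr rfl
      intro i _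
      rw [map_mul, Polynomial.coeToPowerSeries.ringHom_apply,
        Polynomial.coeToPowerSeries.ringHom_apply, Polynomial.coe_C, mul_assoc, hgeom i]
  have : hAB (Finset.univ.val.map a) (Finset.univ.val.map b) k
      = PowerSeries.coeff k (prodOneSub (Finset.univ.val.map b) * U) := rfl
  rw [this, hkey, map_add, map_sum]
  rw [Polynomial.coeff_coe, hTcoeff, zero_add]
  apply Finset.sum_congr rfl
  intro i _
  rw [PowerSeries.coeff_C_mul]
  simp [geomPS]


lemma hABz_entry (a : Fin m → K) (b : Fin n → K) (ha : Function.Injective a)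
    (h0 : ∀ i, a i ≠ 0) (p q : Fin m) :
    hABz (Finset.univ.val.map a) (Finset.univ.val.map b) ((n : ℤ) - (p : ℕ) + (q : ℕ))
      = ∑ i, a i ^ ((m - 1 - (p : ℕ)) + (q : ℕ)) *
          ((∏ j, (a i - b j)) * (∏ l ∈ Finset.univ.erase i, (a i - a l))⁻¹) := by
  classical
  have hpm : (p : ℕ) < m := p.isLt
  have hqm : (q : ℕ) < m := q.isLt
  by_cases hneg : (n : ℤ) - (p : ℕ) + (q : ℕ) < 0
  · rw [hABz, if_pos hneg]
    symm
    set e : ℕ := (m - 1 - (p : ℕ)) + (q : ℕ) with he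
    set g : Polynomial K := Polynomial.X ^ e * ∏ j, (Polynomial.X - Polynomial.C (b j)) with hg
    have hBprod : (∏ j, (Polynomial.X - Polynomial.C (b j)) : Polynomial K) ≠ 0 :=
      Finset.prod_ne_zero_iff.mpr fun j _ => Polynomial.X_sub_C_ne_zero (b j)
    have hdeg : g.natDegree + 2 ≤ m := by
      rw [hg, Polynomial.natDegree_mul (pow_ne_zero e Polynomial.X_ne_zero) hBprod,
        Polynomial.natDegree_X_pow,
        Polynomial.natDegree_prod _ _ fun j _ => Polynomial.X_sub_C_ne_zero (b j)]
      simp only [Polynomial.natDegree_X_sub_C]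
      rw [Finset.sum_const, Finset.card_univ, Fintype.card_fin, smul_eq_mul, mul_one]
      omega
    have hv := lagrange_vanish a ha g hdeg
    rw [← hv]
    apply Finset.sum_congr rfl
    intro i _
    rw [hg, Polynomial.eval_mul, Polynomial.eval_pow, Polynomial.eval_X, Polynomial.eval_prod]
    simp only [Polynomial.eval_sub, Polynomial.eval_X, Polynomial.eval_C]
    ring
  · rw [hABz, if_neg hneg]
    push_neg at hneg
    have htn : ((((n : ℤ) - (p : ℕ) + (q : ℕ)).toNat : ℤ)) = (n : ℤ) - (p : ℕ) + (q : ℕ) :=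
      Int.toNat_of_nonneg hneg
    have hk2 : (n : ℤ) + 1 ≤ ((((n : ℤ) - (p : ℕ) + (q : ℕ)).toNat : ℕ) : ℤ) + m := by omega
    rw [hAB_eq a b ha h0 _ hk2]
    apply Finset.sum_congr rfl
    intro i _
    unfold cAB
    have hexp : ((m : ℤ) - 1 - n) + ((((n : ℤ) - (p : ℕ) + (q : ℕ)).toNat : ℕ) : ℤ)
        = (((m - 1 - (p : ℕ)) + (q : ℕ) : ℕ) : ℤ) := by omega
    calc a i ^ ((m : ℤ) - 1 - n) * ((∏ j, (a i - b j)) *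
          (∏ l ∈ Finset.univ.erase i, (a i - a l))⁻¹) *
          a i ^ (((n : ℤ) - (p : ℕ) + (q : ℕ)).toNat)
        = a i ^ (((m : ℤ) - 1 - n) + ((((n : ℤ) - (p : ℕ) + (q : ℕ)).toNat : ℕ) : ℤ)) *
          ((∏ j, (a i - b j)) * (∏ l ∈ Finset.univ.erase i, (a i - a l))⁻¹) := by
          rw [zpow_add₀ (h0 i), zpow_natCast]; ring
      _ = _ := by rw [hexp, zpow_natCast]

lemma triangle_swap {β : Type*} [CommMonoid β] (f : Fin m → Fin m → β) :
    ∏ i, ∏ l ∈ Finset.Iio i, f i l = ∏ i, ∏ l ∈ Finset.Ioi i, f l i := by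
  rw [Finset.prod_sigma', Finset.prod_sigma']
  apply Finset.prod_nbij' (fun x => ⟨x.2, x.1⟩) (fun x => ⟨x.2, x.1⟩) <;>
    simp [Finset.mem_sigma]

lemma rev_pairs_swap {β : Type*} [CommMonoid β] (f : Fin m → Fin m → β) :
    ∏ i, ∏ j ∈ Finset.Ioi i, f (Fin.rev j) (Fin.rev i) = ∏ i, ∏ j ∈ Finset.Ioi i, f i j := by
  rw [Finset.prod_sigma', Finset.prod_sigma']
  apply Finset.prod_nbij' (fun x => (⟨Fin.rev x.2, Fin.rev x.1⟩ : (_ : Fin m) × Fin m))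
    (fun x => ⟨Fin.rev x.2, Fin.rev x.1⟩) <;>
    simp [Finset.mem_sigma, Fin.rev_lt_rev, Fin.rev_rev]

lemma schurAB_field (a : Fin m → K) (b : Fin n → K) (ha : Function.Injective a)
    (h0 : ∀ i, a i ≠ 0) :
    schurAB (Finset.univ.val.map a) (Finset.univ.val.map b) (fun _ : Fin m => n)
      = ∏ i, ∏ j, (a i - b j) := by
  classical
  set A := Finset.univ.val.map a
  set B := Finset.univ.val.map b
  set D : Fin m → K := fun i => ∏ l ∈ Finset.univ.erase i, (a i - a l) with hD
  have hΔ : ∀ i, D i ≠ 0 := by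
    intro i
    rw [hD, Finset.prod_ne_zero_iff]
    intro l hl
    exact sub_ne_zero.mpr fun h => (Finset.mem_erase.mp hl).1 (ha h).symm
  set X' : Matrix (Fin m) (Fin m) K := Matrix.of fun p i => a i ^ (m - 1 - (p : ℕ)) with hX'
  set Y' : Matrix (Fin m) (Fin m) K := Matrix.of fun i q =>
    a i ^ (q : ℕ) * ((∏ j, (a i - b j)) * (D i)⁻¹) with hY'
  unfold schurAB
  rw [← Matrix.det_submatrix_equiv_self Fin.revPerm]
  have hMN : (Matrix.of fun p q : Fin m =>
      hABz A B (((n : ℕ) : ℤ) + (p : ℕ) - (q : ℕ))).submatrix Fin.revPerm Fin.revPerm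
      = X' * Y' := by
    ext p q
    rw [Matrix.submatrix_apply, Matrix.of_apply, Matrix.mul_apply]
    have hcast : ((n : ℕ) : ℤ) + ((Fin.revPerm p : Fin m) : ℕ) - ((Fin.revPerm q : Fin m) : ℕ)
        = (n : ℤ) - (p : ℕ) + (q : ℕ) := by
      show ((n : ℕ) : ℤ) + ((Fin.rev p : Fin m) : ℕ) - ((Fin.rev q : Fin m) : ℕ) = _
      rw [Fin.val_rev, Fin.val_rev]
      have := p.isLt; have := q.isLt
      omega
    rw [hcast, hABz_entry a b ha h0 p q]
    apply Finset.sum_congr rfl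
    intro i _
    rw [hX', hY', Matrix.of_apply, Matrix.of_apply, pow_add, hD]
    ring
  rw [hMN, Matrix.det_mul]
  -- det Y'
  have hY'det : Y'.det = (∏ i, ((∏ j, (a i - b j)) * (D i)⁻¹)) *
      (∏ i, ∏ j ∈ Finset.Ioi i, (a j - a i)) := by
    have : Y' = Matrix.of fun i q => ((∏ j, (a i - b j)) * (D i)⁻¹) * Matrix.vandermonde a i q := by
      ext i q
      simp only [hY', Matrix.of_apply, Matrix.vandermonde, Matrix.of_apply]
      ring
    rw [this, Matrix.det_mul_column, Matrix.det_vandermonde]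
  -- det X'
  have hX'det : X'.det = ∏ i, ∏ j ∈ Finset.Ioi i, (a i - a j) := by
    have hX : X'.transpose = (Matrix.vandermonde (fun i => a (Fin.rev i))).submatrix
        Fin.revPerm Fin.revPerm := by
      ext i p
      simp only [Matrix.transpose_apply, hX', Matrix.of_apply, Matrix.submatrix_apply,
        Matrix.vandermonde, Fin.revPerm_apply, Fin.rev_rev, Fin.val_rev]
      congr 1
      have := p.isLt
      omega
    calc X'.det = X'.transpose.det := (Matrix.det_transpose X').symm
      _ = ∏ i, ∏ j ∈ Finset.Ioi i, (a (Fin.rev j) - a (Fin.rev i)) := by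
          rw [hX, Matrix.det_submatrix_equiv_self, Matrix.det_vandermonde]
      _ = ∏ i, ∏ j ∈ Finset.Ioi i, (a i - a j) := rev_pairs_swap (fun x y => a x - a y)
  -- assemble
  have hPD : ∏ i, D i = (∏ i, ∏ j ∈ Finset.Ioi i, (a i - a j)) *
      (∏ i, ∏ j ∈ Finset.Ioi i, (a j - a i)) := by
    have hsplit : ∀ i : Fin m, D i = (∏ l ∈ Finset.Ioi i, (a i - a l)) *
        (∏ l ∈ Finset.Iio i, (a i - a l)) := by
      intro i
      show (∏ l ∈ Finset.univ.erase i, (a i - a l)) = _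
      rw [show (Finset.univ.erase i : Finset (Fin m)) = Finset.Ioi i ∪ Finset.Iio i by
        ext l
        simp only [Finset.mem_erase, Finset.mem_union, Finset.mem_Ioi, Finset.mem_Iio,
          Finset.mem_univ, and_true]
        omega]
      apply Finset.prod_union
      simp [Finset.disjoint_left]
      omega
    rw [Finset.prod_congr rfl fun i _ => hsplit i, Finset.prod_mul_distrib]
    congr 1
    exact triangle_swap (fun i l => a i - a l)
  have hPDne : (∏ i, D i) ≠ 0 := Finset.prod_ne_zero_iff.mpr fun i _ => hΔ i
  rw [hX'det, hY'det]
  have hsplit2 : ∏ i, ((∏ j, (a i - b j)) * (D i)⁻¹)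
      = (∏ i, ∏ j, (a i - b j)) * (∏ i, D i)⁻¹ := by
    rw [Finset.prod_mul_distrib, Finset.prod_inv_distrib]
  rw [hsplit2]
  have hc : (∏ i, D i) * (∏ i, D i)⁻¹ = 1 := mul_inv_cancel₀ hPDne
  linear_combination (-((∏ i, ∏ j, (a i - b j)) * (∏ i, D i)⁻¹)) * hPD +
    (∏ i, ∏ j, (a i - b j)) * hc

end Field

section Transfer

variable {R S : Type*} [CommRing R] [CommRing S]

lemma map_prodOneSub (f : R →+* S) (M : Multiset R) :
    PowerSeries.map f (prodOneSub M) = prodOneSub (M.map f) := by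
  unfold prodOneSub
  rw [map_multiset_prod, Multiset.map_map, Multiset.map_map]
  congr 1
  apply Multiset.map_congr rfl
  intro r _
  simp

lemma map_hAB (f : R →+* S) (A B : Multiset R) (k : ℕ) :
    f (hAB A B k) = hAB (A.map f) (B.map f) k := by
  unfold hAB
  rw [← PowerSeries.coeff_map]
  congr 1
  rw [map_mul, map_prodOneSub]
  congr 1
  have h1 : prodOneSub (A.map f) * PowerSeries.map f ((prodOneSub A).invOfUnit 1) = 1 := by
    rw [← map_prodOneSub, ← map_mul, prodOneSub_mul_inv, map_one]
  have h2 : prodOneSub (A.map f) * (prodOneSub (A.map f)).invOfUnit 1 = 1 := prodOneSub_mul_inv _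
  calc PowerSeries.map f ((prodOneSub A).invOfUnit 1)
      = PowerSeries.map f ((prodOneSub A).invOfUnit 1) *
        (prodOneSub (A.map f) * (prodOneSub (A.map f)).invOfUnit 1) := by rw [h2, mul_one]
    _ = (prodOneSub (A.map f) * PowerSeries.map f ((prodOneSub A).invOfUnit 1)) *
        (prodOneSub (A.map f)).invOfUnit 1 := by ring
    _ = (prodOneSub (A.map f)).invOfUnit 1 := by rw [h1, one_mul]

lemma map_hABz (f : R →+* S) (A B : Multiset R) (k : ℤ) :
    f (hABz A B k) = hABz (A.map f) (B.map f) k := by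
  unfold hABz
  split_ifs
  · simp
  · exact map_hAB f A B _

lemma map_schurAB (f : R →+* S) (A B : Multiset R) {h : ℕ} (I : Fin h → ℕ) :
    f (schurAB A B I) = schurAB (A.map f) (B.map f) I := by
  unfold schurAB
  rw [RingHom.map_det]
  congr 1
  ext p q
  simp only [RingHom.mapMatrix_apply, Matrix.map_apply, Matrix.of_apply]
  exact map_hABz f A B _

end Transfer

/-- For alphabets `𝔸 = (a₁,…,a_m)`, `𝔹 = (b₁,…,b_n)` of independent variables,
`S_{(n^m)}(𝔸−𝔹) = Π_{i,j} (a_i − b_j)`. -/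
theorem stmt_10 (m n : ℕ) :
    schurAB
        ((Finset.univ : Finset (Fin m)).val.map
          (fun i => (X (Sum.inl i) : MvPolynomial (Fin m ⊕ Fin n) ℤ)))
        ((Finset.univ : Finset (Fin n)).val.map (fun j => X (Sum.inr j)))
        (fun _ : Fin m => n) =
      ∏ i : Fin m, ∏ j : Fin n,
        ((X (Sum.inl i) : MvPolynomial (Fin m ⊕ Fin n) ℤ) - X (Sum.inr j)) := by
  classical
  set R := MvPolynomial (Fin m ⊕ Fin n) ℤ
  let K := FractionRing R
  have φinj : Function.Injective (algebraMap R K) := IsFractionRing.injective R K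
  apply φinj
  rw [map_schurAB]
  rw [Multiset.map_map, Multiset.map_map]
  have ha : Function.Injective
      ((algebraMap R K) ∘ fun i : Fin m => (X (Sum.inl i) : R)) := by
    intro i i' h
    have := φinj h
    have := MvPolynomial.X_injective this
    exact Sum.inl_injective this
  have h0 : ∀ i : Fin m, ((algebraMap R K) ∘ fun i : Fin m => (X (Sum.inl i) : R)) i ≠ 0 := by
    intro i h
    exact MvPolynomial.X_ne_zero _ (φinj (h.trans (map_zero _).symm))
  rw [schurAB_field (((algebraMap R K)) ∘ fun i : Fin m => (X (Sum.inl i) : R))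
    (((algebraMap R K)) ∘ fun j : Fin n => (X (Sum.inr j) : R)) ha h0]
  rw [map_prod]
  apply Finset.prod_congr rfl
  intro i _
  rw [map_prod]
  apply Finset.prod_congr rfl
  intro j _
  simp
end

section
/- Let 𝔸 = (a₁,…,a_m) and 𝔹 = (b₁,…,b_n) be alphabets of variables, and let I = (i₁,…,i_m) and J = (j₁,…,j_h) be partitions. Then the supersymmetric Schur function indexed by the partition (j₁,…,j_h, i₁+n,…,i_m+n) factorizes: S_{(j₁,…,j_h,i₁+n,…,i_m+n)}(𝔸−𝔹) = S_I(𝔸) · R(𝔸,𝔹) · S_J(−𝔹), where R(𝔸,𝔹) = Π_{a∈𝔸,b∈𝔹}(a−b). -/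
open PowerSeries MvPolynomial

namespace SchurFact

variable {R : Type*} [CommRing R]

/-- coefficient extended by zero to negative indices -/
noncomputable def zc (f : PowerSeries R) (k : ℤ) : R :=
  if k < 0 then 0 else PowerSeries.coeff k.toNat f

lemma zc_neg (f : PowerSeries R) {k : ℤ} (hk : k < 0) : zc f k = 0 := if_pos hk

lemma zc_ofNat (f : PowerSeries R) (k : ℕ) : zc f (k : ℤ) = PowerSeries.coeff k f := by
  simp [zc]

@[simp] lemma constantCoeff_prodOneSub (M : Multiset R) :
    PowerSeries.constantCoeff (prodOneSub M) = 1 := by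
  unfold prodOneSub
  rw [← Multiset.prod_hom _ (PowerSeries.constantCoeff)]
  rw [Multiset.map_map]
  have : ∀ x ∈ M, (PowerSeries.constantCoeff ∘ fun m =>
      (1 : PowerSeries R) - PowerSeries.C m * PowerSeries.X) x = 1 := by
    intro x _; simp
  rw [Multiset.map_congr rfl this]
  simp

lemma prodOneSub_mul_inv (A : Multiset R) :
    prodOneSub A * (prodOneSub A).invOfUnit 1 = 1 :=
  PowerSeries.mul_invOfUnit _ 1 (by simp)

@[simp] lemma prodOneSub_zero : prodOneSub (0 : Multiset R) = 1 := by
  simp [prodOneSub]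

lemma invOfUnit_one : ((1 : PowerSeries R).invOfUnit 1) = 1 := by
  have := prodOneSub_mul_inv (0 : Multiset R)
  rwa [prodOneSub_zero, one_mul] at this

lemma hABz_eq_zc (A B : Multiset R) (k : ℤ) :
    hABz A B k = zc (prodOneSub B * (prodOneSub A).invOfUnit 1) k := rfl

lemma hABz_zero_left (B : Multiset R) (k : ℤ) :
    hABz 0 B k = zc (prodOneSub B) k := by
  rw [hABz_eq_zc, prodOneSub_zero, invOfUnit_one, mul_one]

lemma hABz_zero_right (A : Multiset R) (k : ℤ) :
    hABz A 0 k = zc ((prodOneSub A).invOfUnit 1) k := by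
  rw [hABz_eq_zc, prodOneSub_zero, one_mul]

lemma coeff_prodOneSub_of_lt (M : Multiset R) {k : ℕ} (hk : Multiset.card M < k) :
    PowerSeries.coeff k (prodOneSub M) = 0 := by
  induction M using Multiset.induction generalizing k with
  | empty =>
      rw [prodOneSub_zero, PowerSeries.coeff_one, if_neg (by omega)]
  | cons a M ih =>
      have hd : prodOneSub (a ::ₘ M) =
          ((1 : PowerSeries R) - PowerSeries.C a * PowerSeries.X) * prodOneSub M := by
        simp [prodOneSub]
      rw [hd, sub_mul, one_mul, map_sub]
      obtain ⟨k', rfl⟩ : ∃ k', k = k' + 1 := by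
        refine ⟨k - 1, ?_⟩; simp at hk ⊢; omega
      rw [mul_assoc, PowerSeries.coeff_C_mul, PowerSeries.coeff_succ_X_mul]
      simp at hk
      rw [ih (by omega), ih (by omega), mul_zero, sub_zero]

lemma hABz_zero_left_vanish (B : Multiset R) {k : ℤ} (hk : (Multiset.card B : ℤ) < k) :
    hABz 0 B k = 0 := by
  rw [hABz_zero_left, zc]
  rw [if_neg (by omega)]
  exact coeff_prodOneSub_of_lt _ (by omega)

/-- evaluation: `∑_{j ≤ d} coeff_j (prodOneSub M) * t^(d-j) = ∏_{x∈M} (t - x)` -/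
lemma sum_coeff_prodOneSub (M : Multiset R) (t : R) :
    ∑ j ∈ Finset.range (Multiset.card M + 1),
        PowerSeries.coeff j (prodOneSub M) * t ^ (Multiset.card M - j)
      = (M.map (fun x => t - x)).prod := by
  induction M using Multiset.induction with
  | empty => simp [PowerSeries.coeff_one]
  | cons a M ih =>
      have hd : prodOneSub (a ::ₘ M) =
          ((1 : PowerSeries R) - PowerSeries.C a * PowerSeries.X) * prodOneSub M := by
        simp [prodOneSub]
      set d := Multiset.card M with hdM
      set c : ℕ → R := fun j => PowerSeries.coeff j (prodOneSub M) with hc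
      have hcard : Multiset.card (a ::ₘ M) = d + 1 := by simp [hdM]
      have key : ∀ j, PowerSeries.coeff (j+1) (prodOneSub (a ::ₘ M)) = c (j+1) - a * c j := by
        intro j
        rw [hd, sub_mul, one_mul, map_sub, mul_assoc, PowerSeries.coeff_C_mul,
          PowerSeries.coeff_succ_X_mul]
      have key0 : PowerSeries.coeff 0 (prodOneSub (a ::ₘ M)) = c 0 := by
        rw [hd, sub_mul, one_mul, map_sub, mul_assoc]
        have : PowerSeries.coeff 0 (PowerSeries.X * prodOneSub M) = 0 := by
          simp [PowerSeries.coeff_zero_eq_constantCoeff]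
        rw [PowerSeries.coeff_C_mul, this, mul_zero, sub_zero]
      have hvan : c (d + 1) = 0 := coeff_prodOneSub_of_lt _ (by omega)
      have hS1 : ∑ j ∈ Finset.range (d + 2), c j * t ^ (d + 1 - j)
          = (∑ j ∈ Finset.range (d + 1), c j * t ^ (d - j)) * t := by
        rw [Finset.sum_range_succ, hvan, zero_mul, add_zero, Finset.sum_mul]
        refine Finset.sum_congr rfl ?_
        intro j hj
        simp only [Finset.mem_range] at hj
        rw [show d + 1 - j = (d - j) + 1 by omega, pow_succ]
        ring
      have hS2 := Finset.sum_range_succ' (fun j => c j * t ^ (d + 1 - j)) (d + 1)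
      simp only [Nat.succ_sub_succ, Nat.sub_zero] at hS2
      -- hS2 : ∑_{j∈range(d+2)} = ∑_{j∈range(d+1)} c (j+1) t^(d-j) + c 0 * t^(d+1)
      rw [hcard, Finset.sum_range_succ']
      simp only [key, key0, Nat.succ_sub_succ, Nat.sub_zero, sub_mul]
      rw [Finset.sum_sub_distrib]
      have : ∑ j ∈ Finset.range (d + 1), c (j+1) * t ^ (d - j)
          = (∑ j ∈ Finset.range (d + 1), c j * t ^ (d - j)) * t - c 0 * t ^ (d+1) := by
        rw [← hS1, hS2]; ring
      rw [this, ih]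
      have : ∑ j ∈ Finset.range (d + 1), a * c j * t ^ (d - j)
          = a * ∑ j ∈ Finset.range (d + 1), c j * t ^ (d - j) := by
        rw [Finset.mul_sum]; refine Finset.sum_congr rfl ?_; intro j _; ring
      rw [this, ih]
      rw [Multiset.map_cons, Multiset.prod_cons]
      ring

lemma sum_zc_mul (f g : PowerSeries R) (d : ℕ)
    (hg : ∀ j : ℕ, d < j → PowerSeries.coeff j g = 0)
    (N q : ℕ) (hN : q + d < N) (k : ℤ) :
    ∑ r ∈ Finset.range N, zc f (k - r) * zc g ((r : ℤ) - q) = zc (f * g) (k - q) := by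
  have hsub : Finset.Ico q (q + d + 1) ⊆ Finset.range N := by
    intro r hr; simp only [Finset.mem_Ico] at hr; simp only [Finset.mem_range]; omega
  rw [← Finset.sum_subset hsub ?hvanish]
  case hvanish =>
    intro r _ hr
    simp only [Finset.mem_Ico, not_and, not_lt] at hr
    rcases lt_or_ge r q with h | h
    · rw [zc_neg g (by push_cast; omega), mul_zero]
    · have h2 : q + d + 1 ≤ r := hr h
      have : zc g ((r : ℤ) - q) = 0 := by
        have : ((r : ℤ) - q) = ((r - q : ℕ) : ℤ) := by push_cast; omega
        rw [this, zc_ofNat, hg _ (by omega)]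
      rw [this, mul_zero]
  rw [Finset.sum_Ico_eq_sum_range]
  rw [show q + d + 1 - q = d + 1 by omega]
  have hsimp : ∀ j ∈ Finset.range (d + 1),
      zc f (k - ((q + j : ℕ) : ℤ)) * zc g (((q + j : ℕ) : ℤ) - q)
      = zc f ((k - q) - j) * PowerSeries.coeff j g := by
    intro j _
    congr 1
    · congr 1; push_cast; ring
    · rw [show ((q + j : ℕ) : ℤ) - q = (j : ℤ) by push_cast; ring, zc_ofNat]
  rw [Finset.sum_congr rfl hsimp]
  rcases lt_or_ge (k - q) 0 with hneg | hpos
  · rw [zc_neg _ hneg]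
    refine Finset.sum_eq_zero ?_
    intro j _
    rw [zc_neg f (by omega), zero_mul]
  · set K := (k - q).toNat with hKdef
    have hK : k - q = (K : ℤ) := by omega
    rw [hK]
    rw [zc_ofNat, mul_comm f g, PowerSeries.coeff_mul]
    rw [Finset.Nat.sum_antidiagonal_eq_sum_range_succ
      (fun i j => PowerSeries.coeff i g * PowerSeries.coeff j f) K]
    have hterm : ∀ j : ℕ, zc f ((K : ℤ) - j)
        = (if j ≤ K then PowerSeries.coeff (K - j) f else 0) := by
      intro j
      rcases le_or_gt j K with h | h
      · rw [if_pos h]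
        unfold zc
        rw [if_neg (by omega), show ((K : ℤ) - j).toNat = K - j by omega]
      · rw [if_neg (by omega), zc_neg _ (by push_cast; omega)]
    simp only [hterm]
    set F : ℕ → R := fun j =>
      (if j ≤ K then PowerSeries.coeff (K - j) f else 0) * PowerSeries.coeff j g with hF
    have e2 : ∀ j ∈ Finset.range (K + 1),
        PowerSeries.coeff j g * PowerSeries.coeff (K - j) f = F j := by
      intro j hj
      simp only [Finset.mem_range] at hj
      rw [hF]; simp only [if_pos (by omega : j ≤ K)]; ring
    rw [Finset.sum_congr rfl e2]
    set L := max (d + 1) (K + 1) with hL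
    have g1 : ∑ j ∈ Finset.range (d + 1), F j = ∑ j ∈ Finset.range L, F j := by
      refine Finset.sum_subset (Finset.range_subset_range.2 (by omega)) ?_
      intro j _ hj
      simp only [Finset.mem_range, not_lt] at hj
      rw [hF]; simp only; rw [hg j (by omega), mul_zero]
    have g2 : ∑ j ∈ Finset.range (K + 1), F j = ∑ j ∈ Finset.range L, F j := by
      refine Finset.sum_subset (Finset.range_subset_range.2 (by omega)) ?_
      intro j _ hj
      simp only [Finset.mem_range, not_lt] at hj
      rw [hF]; simp only; rw [if_neg (by omega), zero_mul]
    rw [g1, ← g2]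

lemma sum_pow_zc (M : Multiset R) (t : R) (N q : ℕ) (hN : q + Multiset.card M < N) :
    ∑ r ∈ Finset.range N, t ^ (N - 1 - r) * zc (prodOneSub M) ((r : ℤ) - q)
      = t ^ (N - 1 - q - Multiset.card M) * (M.map (fun x => t - x)).prod := by
  set d := Multiset.card M with hd
  have hsub : Finset.Ico q (q + d + 1) ⊆ Finset.range N := by
    intro r hr; simp only [Finset.mem_Ico] at hr; simp only [Finset.mem_range]; omega
  rw [← Finset.sum_subset hsub ?hvanish]
  case hvanish =>
    intro r _ hr
    simp only [Finset.mem_Ico, not_and, not_lt] at hr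
    rcases lt_or_ge r q with h | h
    · rw [zc_neg _ (by push_cast; omega), mul_zero]
    · have h2 : q + d + 1 ≤ r := hr h
      have : zc (prodOneSub M) ((r : ℤ) - q) = 0 := by
        have : ((r : ℤ) - q) = ((r - q : ℕ) : ℤ) := by push_cast; omega
        rw [this, zc_ofNat, coeff_prodOneSub_of_lt _ (by omega)]
      rw [this, mul_zero]
  rw [Finset.sum_Ico_eq_sum_range]
  rw [show q + d + 1 - q = d + 1 by omega]
  rw [← sum_coeff_prodOneSub M t, ← hd, Finset.mul_sum]
  refine Finset.sum_congr rfl ?_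
  intro j hj
  simp only [Finset.mem_range] at hj
  rw [show ((q + j : ℕ) : ℤ) - q = (j : ℤ) by push_cast; ring, zc_ofNat]
  rw [show N - 1 - (q + j) = (N - 1 - q - d) + (d - j) by omega, pow_add]
  ring

lemma hABz_diag_one (A : Multiset R) : hABz 0 A 0 = 1 := by
  rw [hABz_zero_left, show (0 : ℤ) = ((0 : ℕ) : ℤ) by norm_num, zc_ofNat,
    PowerSeries.coeff_zero_eq_constantCoeff, constantCoeff_prodOneSub]

/-- reversed Vandermonde determinant -/
lemma det_revVandermonde {N : ℕ} (t : Fin N → R) :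
    Matrix.det (Matrix.of fun s r : Fin N => t s ^ (N - 1 - (r : ℕ)))
      = ∏ i : Fin N, ∏ j ∈ Finset.Ioi i, (t i - t j) := by
  set W : Matrix (Fin N) (Fin N) R := Matrix.of fun s r : Fin N => t s ^ (N - 1 - (r : ℕ))
  have h1 : W.submatrix Fin.revPerm Fin.revPerm = Matrix.vandermonde (fun i => t i.rev) := by
    ext s r
    have hr := r.isLt
    simp only [Matrix.submatrix_apply, Matrix.vandermonde, W, Matrix.of_apply, Fin.revPerm_apply]
    congr 1
    rw [Fin.val_rev]
    omega
  have h2 := Matrix.det_submatrix_equiv_self (Fin.revPerm) W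
  rw [h1] at h2
  rw [← h2, Matrix.det_vandermonde]
  rw [Finset.prod_sigma', Finset.prod_sigma']
  refine Finset.prod_nbij' (fun p => ⟨p.2.rev, p.1.rev⟩) (fun p => ⟨p.2.rev, p.1.rev⟩)
    ?_ ?_ ?_ ?_ ?_
  · intro p hp
    simp only [Finset.mem_sigma, Finset.mem_univ, Finset.mem_Ioi, true_and] at hp ⊢
    exact Fin.rev_lt_rev.mpr hp
  · intro p hp
    simp only [Finset.mem_sigma, Finset.mem_univ, Finset.mem_Ioi, true_and] at hp ⊢
    exact Fin.rev_lt_rev.mpr hp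
  · intro p _
    simp [Fin.rev_rev]
  · intro p _
    simp [Fin.rev_rev]
  · intro p _
    simp [Fin.rev_rev]

lemma det_lowerTriangular_diag_one {N : ℕ} (T : Matrix (Fin N) (Fin N) R)
    (hT : ∀ r q : Fin N, r < q → T r q = 0) (hdiag : ∀ r, T r r = 1) :
    T.det = 1 := by
  have : T.BlockTriangular OrderDual.toDual := by
    intro i j hij
    exact hT i j hij
  rw [Matrix.det_of_lowerTriangular T this]
  simp [hdiag]

/-- Step 1: peeling off `S_J(-B)`. -/
lemma step1 {m n h : ℕ} (A B : Multiset R) (hA : Multiset.card A ≤ m)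
    (hB : Multiset.card B ≤ n) (I : Fin m → ℕ) (J : Fin h → ℕ) :
    schurAB A B (Fin.append J (fun i => I i + n)) =
      schurAB 0 B J * schurAB A B (fun p => I p + n) := by
  classical
  set K : Fin (h + m) → ℕ := Fin.append J (fun i => I i + n) with hK
  set M : Matrix (Fin (h + m)) (Fin (h + m)) R :=
    Matrix.of (fun p q => hABz A B ((K p : ℤ) + (p : ℕ) - (q : ℕ))) with hM
  set T : Matrix (Fin (h + m)) (Fin (h + m)) R :=
    Matrix.of (fun r q => if (q : ℕ) < h
      then hABz 0 A (((r : ℕ) : ℤ) - ((q : ℕ) : ℤ))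
      else if r = q then 1 else 0) with hT
  have hdetT : T.det = 1 := by
    refine det_lowerTriangular_diag_one T ?_ ?_
    · intro r q hrq
      have hrq' : (r : ℕ) < (q : ℕ) := hrq
      simp only [hT, Matrix.of_apply]
      split
      · rw [hABz_zero_left, zc_neg _ (by omega)]
      · rw [if_neg (by exact fun hc => absurd (congrArg Fin.val hc) (by omega))]
    · intro r
      simp only [hT, Matrix.of_apply]
      split
      · rw [sub_self, hABz_diag_one]
      · simp
  have hMT : M * T = Matrix.of (fun (p q : Fin (h + m)) => if (q : ℕ) < h
      then hABz 0 B ((K p : ℤ) + (p : ℕ) - (q : ℕ))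
      else hABz A B ((K p : ℤ) + (p : ℕ) - (q : ℕ))) := by
    ext p q
    rw [Matrix.mul_apply]
    simp only [hM, hT, Matrix.of_apply]
    by_cases hq : (q : ℕ) < h
    · simp only [if_pos hq]
      have conv1 : ∀ r : Fin (h + m),
          hABz A B ((K p : ℤ) + (p : ℕ) - (r : ℕ)) * hABz 0 A (((r : ℕ) : ℤ) - ((q : ℕ) : ℤ))
          = zc (prodOneSub B * (prodOneSub A).invOfUnit 1) (((K p : ℤ) + (p : ℕ)) - ((r : ℕ) : ℤ))
            * zc (prodOneSub A) (((r : ℕ) : ℤ) - ((q : ℕ) : ℤ)) := by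
        intro r
        rw [hABz_eq_zc, hABz_zero_left]
      rw [Finset.sum_congr rfl (fun r _ => conv1 r)]
      have := Fin.sum_univ_eq_sum_range (fun r : ℕ =>
        zc (prodOneSub B * (prodOneSub A).invOfUnit 1) (((K p : ℤ) + (p : ℕ)) - (r : ℤ))
          * zc (prodOneSub A) ((r : ℤ) - ((q : ℕ) : ℤ))) (h + m)
      rw [this]
      rw [sum_zc_mul _ _ (Multiset.card A) (fun j hj => coeff_prodOneSub_of_lt A hj)
        (h + m) (q : ℕ) (by omega) _]
      have hprod : prodOneSub B * (prodOneSub A).invOfUnit 1 * prodOneSub A = prodOneSub B := by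
        rw [mul_assoc, mul_comm ((prodOneSub A).invOfUnit 1), prodOneSub_mul_inv, mul_one]
      rw [hprod, ← hABz_zero_left]
    · simp only [if_neg hq, mul_ite, mul_one, mul_zero]
      rw [Finset.sum_ite_eq' Finset.univ q
        (fun r => hABz A B ((K p : ℤ) + (p : ℕ) - (r : ℕ)))]
      rw [if_pos (Finset.mem_univ q)]
  have hdet1 : M.det = (M * T).det := by
    rw [Matrix.det_mul, hdetT, mul_one]
  have hre := Matrix.det_submatrix_equiv_self (finSumFinEquiv : Fin h ⊕ Fin m ≃ Fin (h + m)) (M * T)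
  set JB : Matrix (Fin h) (Fin h) R :=
    Matrix.of (fun p q : Fin h => hABz 0 B ((J p : ℤ) + (p : ℕ) - (q : ℕ))) with hJB
  set M1 : Matrix (Fin m) (Fin m) R :=
    Matrix.of (fun p q : Fin m => hABz A B (((I p + n : ℕ) : ℤ) + (p : ℕ) - (q : ℕ))) with hM1
  set TRm : Matrix (Fin h) (Fin m) R :=
    Matrix.of (fun (p : Fin h) (q : Fin m) =>
      hABz A B ((J p : ℤ) + (p : ℕ) - ((h + q : ℕ) : ℤ))) with hTRm
  have hblocks : (M * T).submatrix finSumFinEquiv finSumFinEquiv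
      = Matrix.fromBlocks JB TRm 0 M1 := by
    ext pq rs
    cases pq with
    | inl p =>
      cases rs with
      | inl q =>
        simp only [Matrix.submatrix_apply, hMT, Matrix.of_apply, finSumFinEquiv_apply_left,
          Matrix.fromBlocks_apply₁₁]
        rw [if_pos (by simpa using q.isLt)]
        simp only [hK, Fin.append_left, Fin.coe_castAdd, hJB, Matrix.of_apply]
      | inr q =>
        simp only [Matrix.submatrix_apply, hMT, Matrix.of_apply, finSumFinEquiv_apply_left,
          finSumFinEquiv_apply_right, Matrix.fromBlocks_apply₁₂]
        rw [if_neg (by rw [Fin.coe_natAdd]; omega)]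
        simp only [hK, Fin.append_left, Fin.coe_castAdd, Fin.coe_natAdd, hTRm, Matrix.of_apply]
        all_goals (first | rfl | (congr 1; push_cast; ring))
    | inr p =>
      cases rs with
      | inl q =>
        simp only [Matrix.submatrix_apply, hMT, Matrix.of_apply, finSumFinEquiv_apply_left,
          finSumFinEquiv_apply_right, Matrix.fromBlocks_apply₂₁]
        rw [if_pos (by simpa using q.isLt)]
        simp only [hK, Fin.append_right, Fin.coe_natAdd, Fin.coe_castAdd]
        rw [hABz_zero_left_vanish B (by
          have hq := q.isLt
          push_cast
          omega)]
        simp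
      | inr q =>
        simp only [Matrix.submatrix_apply, hMT, Matrix.of_apply,
          finSumFinEquiv_apply_right, Matrix.fromBlocks_apply₂₂]
        rw [if_neg (by rw [Fin.coe_natAdd]; omega)]
        simp only [hK, Fin.append_right, Fin.coe_natAdd, hM1, Matrix.of_apply]
        all_goals (first | rfl | (congr 1; push_cast; ring))
  have : schurAB A B K = M.det := rfl
  rw [this, hdet1, ← hre, hblocks, Matrix.det_fromBlocks_zero₂₁]
  rfl

section Step2

variable {m n : ℕ}

/-- embedding of `Fin n ⊕ Fin m` into `ℕ` -/
def eP (r : Fin n ⊕ Fin m) : ℕ := Sum.elim (fun q : Fin n => (q : ℕ)) (fun q : Fin m => n + q) r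

lemma eP_eq (r : Fin n ⊕ Fin m) : eP r = ((finSumFinEquiv r : Fin (n + m)) : ℕ) := by
  cases r with
  | inl q => simp [eP, finSumFinEquiv_apply_left]
  | inr q => simp [eP, finSumFinEquiv_apply_right]

lemma sum_eP (F : ℕ → R) :
    ∑ r : Fin n ⊕ Fin m, F (eP r) = ∑ j ∈ Finset.range (n + m), F j := by
  rw [← Fin.sum_univ_eq_sum_range F (n + m)]
  rw [← Equiv.sum_comp (finSumFinEquiv : Fin n ⊕ Fin m ≃ Fin (n + m)) (fun i => F (i : ℕ))]
  exact Finset.sum_congr rfl (fun r _ => by rw [eP_eq])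

/-- the Sylvester-type matrix -/
noncomputable def Chat (a : Fin m → R) (b : Fin n → R) :
    Matrix (Fin n ⊕ Fin m) (Fin n ⊕ Fin m) R :=
  Matrix.of fun r q =>
    Sum.elim
      (fun q1 : Fin n => hABz 0 (Multiset.map a Finset.univ.val) ((eP r : ℤ) - (q1 : ℕ)))
      (fun q2 : Fin m => hABz 0 (Multiset.map b Finset.univ.val) ((eP r : ℤ) - (q2 : ℕ))) q

lemma card_map_univ (a : Fin m → R) : Multiset.card (Multiset.map a Finset.univ.val) = m := by
  rw [Multiset.card_map]
  exact Finset.card_univ.trans (Fintype.card_fin m)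

lemma prod_map_univ (f : Fin m → R) : (Multiset.map f Finset.univ.val).prod = ∏ i, f i := rfl

/-- Step 2, identity X : `S_I(A) * det Chat = S_{I+n}(A-B)` -/
lemma step2X (a : Fin m → R) (b : Fin n → R) (I : Fin m → ℕ) :
    schurAB (Multiset.map a Finset.univ.val) 0 I * (Chat a b).det
      = schurAB (Multiset.map a Finset.univ.val) (Multiset.map b Finset.univ.val)
          (fun p => I p + n) := by
  classical
  set A : Multiset R := Multiset.map a Finset.univ.val with hA
  set B : Multiset R := Multiset.map b Finset.univ.val with hB
  have hcA : Multiset.card A = m := card_map_univ a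
  have hcB : Multiset.card B = n := card_map_univ b
  set H1 : Matrix (Fin m) (Fin n) R :=
    Matrix.of (fun p r => hABz A 0 ((I p : ℤ) + n + (p : ℕ) - (r : ℕ))) with hH1
  set H2 : Matrix (Fin m) (Fin m) R :=
    Matrix.of (fun p r => hABz A 0 ((I p : ℤ) + n + (p : ℕ) - ((n + r : ℕ) : ℤ))) with hH2
  set Hhat : Matrix (Fin n ⊕ Fin m) (Fin n ⊕ Fin m) R :=
    Matrix.fromBlocks 1 0 H1 H2 with hHhat
  have hdetH : Hhat.det = schurAB A 0 I := by
    rw [hHhat, Matrix.det_fromBlocks_zero₁₂, Matrix.det_one, one_mul]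
    have : H2 = Matrix.of (fun p q : Fin m => hABz A 0 ((I p : ℤ) + (p : ℕ) - (q : ℕ))) := by
      ext p q
      simp only [hH2, Matrix.of_apply]
      congr 1
      push_cast
      ring
    rw [this]
    rfl
  have hrowH : ∀ (p : Fin m) (r : Fin n ⊕ Fin m),
      Hhat (Sum.inr p) r = zc ((prodOneSub A).invOfUnit 1)
        (((I p : ℤ) + n + (p : ℕ)) - (eP r : ℤ)) := by
    intro p r
    cases r with
    | inl r => rw [hHhat]; exact (hABz_zero_right A _)
    | inr r =>
      rw [hHhat]
      show H2 p r = _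
      rw [hH2]
      show hABz A 0 _ = _
      rw [hABz_zero_right]
      congr 1
  set C11 : Matrix (Fin n) (Fin n) R :=
    Matrix.of (fun p q : Fin n => hABz 0 A ((p : ℕ) - (q : ℕ) : ℤ)) with hC11
  set C12 : Matrix (Fin n) (Fin m) R :=
    Matrix.of (fun (p : Fin n) (q : Fin m) => hABz 0 B ((p : ℕ) - (q : ℕ) : ℤ)) with hC12
  set M2 : Matrix (Fin m) (Fin m) R :=
    Matrix.of (fun p q : Fin m => hABz A B (((I p + n : ℕ) : ℤ) + (p : ℕ) - (q : ℕ))) with hM2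
  have hprodHC : Hhat * Chat a b = Matrix.fromBlocks C11 C12 0 M2 := by
    ext pq rs
    cases pq with
    | inl p =>
      rw [Matrix.mul_apply, Fintype.sum_sum_type]
      have h1 : ∀ r : Fin n, Hhat (Sum.inl p) (Sum.inl r) = (if p = r then 1 else 0) := by
        intro r
        rw [hHhat]
        show (1 : Matrix (Fin n) (Fin n) R) p r = _
        rw [Matrix.one_apply]
      have h2 : ∀ r : Fin m, Hhat (Sum.inl p) (Sum.inr r) = 0 := by
        intro r
        rw [hHhat]
        show (0 : Matrix (Fin n) (Fin m) R) p r = _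
        rfl
      simp only [h1, h2, zero_mul, Finset.sum_const_zero, add_zero, ite_mul, one_mul, zero_mul]
      rw [Finset.sum_ite_eq Finset.univ p (fun r => Chat a b (Sum.inl r) rs)]
      rw [if_pos (Finset.mem_univ p)]
      cases rs with
      | inl q => rfl
      | inr q => rfl
    | inr p =>
      rw [Matrix.mul_apply]
      cases rs with
      | inl q =>
        have hterm : ∀ r : Fin n ⊕ Fin m,
            Hhat (Sum.inr p) r * Chat a b r (Sum.inl q)
            = zc ((prodOneSub A).invOfUnit 1) (((I p : ℤ) + n + (p : ℕ)) - (eP r : ℤ))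
              * zc (prodOneSub A) ((eP r : ℤ) - (q : ℕ)) := by
          intro r
          rw [hrowH]
          congr 1
          show hABz 0 A _ = _
          rw [hABz_zero_left]
        rw [Finset.sum_congr rfl (fun r _ => hterm r)]
        rw [sum_eP (fun j => zc ((prodOneSub A).invOfUnit 1) (((I p : ℤ) + n + (p : ℕ)) - (j : ℤ))
          * zc (prodOneSub A) ((j : ℤ) - (q : ℕ)))]
        rw [sum_zc_mul _ _ (Multiset.card A) (fun j hj => coeff_prodOneSub_of_lt A hj)
          (n + m) (q : ℕ) (by omega) _]
        have hone : (prodOneSub A).invOfUnit 1 * prodOneSub A = 1 := by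
          rw [mul_comm, prodOneSub_mul_inv]
        rw [hone]
        have hpos : ¬ ((I p : ℤ) + n + (p : ℕ) - (q : ℕ) < 0) := by
          have := q.isLt
          omega
        have hne : ((I p : ℤ) + n + (p : ℕ) - (q : ℕ)).toNat ≠ 0 := by
          have := q.isLt
          omega
        show zc 1 _ = (0 : Matrix (Fin m) (Fin n) R) p q
        unfold zc
        rw [if_neg hpos, PowerSeries.coeff_one, if_neg hne]
        rfl
      | inr q =>
        have hterm : ∀ r : Fin n ⊕ Fin m,
            Hhat (Sum.inr p) r * Chat a b r (Sum.inr q)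
            = zc ((prodOneSub A).invOfUnit 1) (((I p : ℤ) + n + (p : ℕ)) - (eP r : ℤ))
              * zc (prodOneSub B) ((eP r : ℤ) - (q : ℕ)) := by
          intro r
          rw [hrowH]
          congr 1
          show hABz 0 B _ = _
          rw [hABz_zero_left]
        rw [Finset.sum_congr rfl (fun r _ => hterm r)]
        rw [sum_eP (fun j => zc ((prodOneSub A).invOfUnit 1) (((I p : ℤ) + n + (p : ℕ)) - (j : ℤ))
          * zc (prodOneSub B) ((j : ℤ) - (q : ℕ)))]
        rw [sum_zc_mul _ _ (Multiset.card B) (fun j hj => coeff_prodOneSub_of_lt B hj)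
          (n + m) (q : ℕ) (by omega) _]
        show _ = M2 p q
        rw [hM2]
        show _ = hABz A B _
        rw [hABz_eq_zc, mul_comm ((prodOneSub A).invOfUnit 1) (prodOneSub B)]
        congr 1
  have hdetC11 : C11.det = 1 := by
    refine det_lowerTriangular_diag_one C11 ?_ ?_
    · intro r q hrq
      have : (r : ℕ) < (q : ℕ) := hrq
      rw [hC11]
      show hABz 0 A _ = 0
      rw [hABz_zero_left, zc_neg _ (by omega)]
    · intro r
      rw [hC11]
      show hABz 0 A _ = 1
      rw [sub_self, hABz_diag_one]
  have := congrArg Matrix.det hprodHC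
  rw [Matrix.det_mul, hdetH, Matrix.det_fromBlocks_zero₂₁, hdetC11, one_mul] at this
  rw [this]
  rfl

/-- Step 2, identity Y: evaluating `V * Chat`. -/
lemma step2Y (a : Fin m → R) (b : Fin n → R) :
    (∏ i : Fin (n + m), ∏ j ∈ Finset.Ioi i,
        (Sum.elim b a (finSumFinEquiv.symm i) - Sum.elim b a (finSumFinEquiv.symm j)))
      * (Chat a b).det
    = ((∏ s : Fin n, ∏ i : Fin m, (b s - a i))
        * ∏ i : Fin n, ∏ j ∈ Finset.Ioi i, (b i - b j))
      * ((∏ s : Fin m, ∏ j : Fin n, (a s - b j))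
        * ∏ i : Fin m, ∏ j ∈ Finset.Ioi i, (a i - a j)) := by
  classical
  set A : Multiset R := Multiset.map a Finset.univ.val with hA
  set B : Multiset R := Multiset.map b Finset.univ.val with hB
  have hcA : Multiset.card A = m := card_map_univ a
  have hcB : Multiset.card B = n := card_map_univ b
  set u : Fin n ⊕ Fin m → R := Sum.elim b a with hu
  set V : Matrix (Fin n ⊕ Fin m) (Fin n ⊕ Fin m) R :=
    Matrix.of (fun s r => u s ^ (n + m - 1 - eP r)) with hV
  set t : Fin (n + m) → R := fun s => u (finSumFinEquiv.symm s) with ht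
  have hVW : V = (Matrix.of fun s r : Fin (n + m) =>
      t s ^ (n + m - 1 - (r : ℕ))).submatrix finSumFinEquiv finSumFinEquiv := by
    ext s r
    simp only [Matrix.submatrix_apply, Matrix.of_apply, hV, ht, Equiv.symm_apply_apply, eP_eq]
  have hdetV : V.det = ∏ i : Fin (n + m), ∏ j ∈ Finset.Ioi i, (t i - t j) := by
    rw [hVW, Matrix.det_submatrix_equiv_self, det_revVandermonde]
  set Wb : Matrix (Fin n) (Fin n) R :=
    Matrix.of (fun s q : Fin n => b s ^ (n - 1 - (q : ℕ))) with hWb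
  set Wa : Matrix (Fin m) (Fin m) R :=
    Matrix.of (fun s q : Fin m => a s ^ (m - 1 - (q : ℕ))) with hWa
  set TL : Matrix (Fin n) (Fin n) R :=
    Matrix.of (fun s q : Fin n => (∏ i : Fin m, (b s - a i)) * Wb s q) with hTL
  set BR : Matrix (Fin m) (Fin m) R :=
    Matrix.of (fun s q : Fin m => (∏ j : Fin n, (a s - b j)) * Wa s q) with hBR
  have hprodA : ∀ x : R, (Multiset.map (fun y => x - y) A).prod = ∏ i : Fin m, (x - a i) := by
    intro x
    rw [hA, Multiset.map_map]
    rfl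
  have hprodB : ∀ x : R, (Multiset.map (fun y => x - y) B).prod = ∏ j : Fin n, (x - b j) := by
    intro x
    rw [hB, Multiset.map_map]
    rfl
  have hVC : V * Chat a b = Matrix.fromBlocks TL 0 0 BR := by
    ext s q
    rw [Matrix.mul_apply]
    cases q with
    | inl q =>
      have hterm : ∀ r, V s r * Chat a b r (Sum.inl q)
          = u s ^ (n + m - 1 - eP r) * zc (prodOneSub A) ((eP r : ℤ) - (q : ℕ)) := by
        intro r
        rw [hV]
        show u s ^ _ * _ = _
        congr 1
        show hABz 0 A _ = _
        rw [hABz_zero_left]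
      rw [Finset.sum_congr rfl (fun r _ => hterm r)]
      rw [sum_eP (fun j => u s ^ (n + m - 1 - j) * zc (prodOneSub A) ((j : ℤ) - (q : ℕ)))]
      rw [sum_pow_zc A (u s) (n + m) q (by rw [hcA]; have := q.isLt; omega)]
      rw [hcA, hprodA (u s)]
      have hexp : n + m - 1 - q - m = n - 1 - q := by have := q.isLt; omega
      rw [hexp]
      cases s with
      | inl s =>
        show _ = TL s q
        rw [hTL]
        show _ = _ * Wb s q
        rw [hWb, hu]
        show _ = _ * (b s ^ (n - 1 - (q : ℕ)))
        simp only [Sum.elim_inl]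
        ring
      | inr s =>
        rw [hu]
        simp only [Sum.elim_inr]
        rw [Finset.prod_eq_zero (Finset.mem_univ s) (sub_self (a s))]
        show _ * 0 = (0 : Matrix (Fin m) (Fin n) R) s q
        rw [mul_zero]
        rfl
    | inr q =>
      have hterm : ∀ r, V s r * Chat a b r (Sum.inr q)
          = u s ^ (n + m - 1 - eP r) * zc (prodOneSub B) ((eP r : ℤ) - (q : ℕ)) := by
        intro r
        rw [hV]
        show u s ^ _ * _ = _
        congr 1
        show hABz 0 B _ = _
        rw [hABz_zero_left]
      rw [Finset.sum_congr rfl (fun r _ => hterm r)]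
      rw [sum_eP (fun j => u s ^ (n + m - 1 - j) * zc (prodOneSub B) ((j : ℤ) - (q : ℕ)))]
      rw [sum_pow_zc B (u s) (n + m) q (by rw [hcB]; have := q.isLt; omega)]
      rw [hcB, hprodB (u s)]
      have hexp : n + m - 1 - q - n = m - 1 - q := by have := q.isLt; omega
      rw [hexp]
      cases s with
      | inl s =>
        rw [hu]
        simp only [Sum.elim_inl]
        rw [Finset.prod_eq_zero (Finset.mem_univ s) (sub_self (b s))]
        show _ * 0 = (0 : Matrix (Fin n) (Fin m) R) s q
        rw [mul_zero]
        rfl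
      | inr s =>
        show _ = BR s q
        rw [hBR]
        show _ = _ * Wa s q
        rw [hWa, hu]
        show _ = _ * (a s ^ (m - 1 - (q : ℕ)))
        simp only [Sum.elim_inr]
        ring
  have hdet := congrArg Matrix.det hVC
  rw [Matrix.det_mul, hdetV, Matrix.det_fromBlocks_zero₂₁] at hdet
  have hdetTL : TL.det = (∏ s : Fin n, ∏ i : Fin m, (b s - a i))
      * ∏ i : Fin n, ∏ j ∈ Finset.Ioi i, (b i - b j) := by
    rw [hTL, Matrix.det_mul_column (fun s => ∏ i : Fin m, (b s - a i)) Wb]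
    rw [hWb, det_revVandermonde]
  have hdetBR : BR.det = (∏ s : Fin m, ∏ j : Fin n, (a s - b j))
      * ∏ i : Fin m, ∏ j ∈ Finset.Ioi i, (a i - a j) := by
    rw [hBR, Matrix.det_mul_column (fun s => ∏ j : Fin n, (a s - b j)) Wa]
    rw [hWa, det_revVandermonde]
  rw [hdetTL, hdetBR] at hdet
  exact hdet

lemma prod_split (a : Fin m → R) (b : Fin n → R) :
    (∏ i : Fin (n + m), ∏ j ∈ Finset.Ioi i,
        (Sum.elim b a (finSumFinEquiv.symm i) - Sum.elim b a (finSumFinEquiv.symm j)))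
    = ((∏ i : Fin n, ∏ j ∈ Finset.Ioi i, (b i - b j))
        * ∏ i : Fin m, ∏ j ∈ Finset.Ioi i, (a i - a j))
      * ∏ s : Fin n, ∏ i : Fin m, (b s - a i) := by
  classical
  set t : Fin (n + m) → R := fun s => Sum.elim b a (finSumFinEquiv.symm s) with ht
  have htc : ∀ i : Fin n, t (Fin.castAdd m i) = b i := by
    intro i
    rw [ht]
    show Sum.elim b a (finSumFinEquiv.symm (Fin.castAdd m i)) = b i
    rw [finSumFinEquiv_symm_apply_castAdd]
    rfl
  have htn : ∀ i : Fin m, t (Fin.natAdd n i) = a i := by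
    intro i
    rw [ht]
    show Sum.elim b a (finSumFinEquiv.symm (Fin.natAdd n i)) = a i
    rw [finSumFinEquiv_symm_apply_natAdd]
    rfl
  have hIoi : ∀ (N : ℕ) (g : Fin N → R) (i : Fin N),
      ∏ j ∈ Finset.Ioi i, g j = ∏ j : Fin N, if i < j then g j else 1 := by
    intro N g i
    rw [← Finset.prod_filter]
    congr 1
    exact Finset.filter_lt_eq_Ioi.symm
  have key : (∏ i : Fin (n + m), ∏ j ∈ Finset.Ioi i, (t i - t j))
      = ((∏ i : Fin n, ∏ j ∈ Finset.Ioi i, (b i - b j))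
          * ∏ i : Fin m, ∏ j ∈ Finset.Ioi i, (a i - a j))
        * ∏ s : Fin n, ∏ i : Fin m, (b s - a i) := by
    have step0 : ∀ i : Fin (n + m), ∏ j ∈ Finset.Ioi i, (t i - t j)
        = ∏ j : Fin (n + m), if i < j then t i - t j else 1 :=
      fun i => hIoi (n + m) (fun j => t i - t j) i
    rw [Finset.prod_congr rfl (fun i _ => step0 i)]
    rw [Fin.prod_univ_add (fun i : Fin (n + m) =>
      ∏ j : Fin (n + m), if i < j then t i - t j else 1)]
    have inner : ∀ i : Fin (n + m),
        (∏ j : Fin (n + m), if i < j then t i - t j else 1)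
        = (∏ j1 : Fin n, if i < Fin.castAdd m j1 then t i - t (Fin.castAdd m j1) else 1)
          * ∏ j2 : Fin m, if i < Fin.natAdd n j2 then t i - t (Fin.natAdd n j2) else 1 :=
      fun i => Fin.prod_univ_add (fun j : Fin (n + m) => if i < j then t i - t j else 1)
    have part1 : ∀ i1 : Fin n,
        (∏ j : Fin (n + m), if Fin.castAdd m i1 < j then t (Fin.castAdd m i1) - t j else 1)
        = (∏ j1 ∈ Finset.Ioi i1, (b i1 - b j1)) * ∏ j2 : Fin m, (b i1 - a j2) := by
      intro i1
      rw [inner]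
      congr 1
      · rw [hIoi n (fun j1 => b i1 - b j1) i1]
        refine Finset.prod_congr rfl ?_
        intro j1 _
        have hcond : (Fin.castAdd m i1 < Fin.castAdd m j1) ↔ (i1 < j1) := by
          simp only [Fin.lt_def, Fin.coe_castAdd]
        by_cases hij : i1 < j1
        · rw [if_pos (hcond.mpr hij), if_pos hij, htc, htc]
        · rw [if_neg (fun hc => hij (hcond.mp hc)), if_neg hij]
      · refine Finset.prod_congr rfl ?_
        intro j2 _
        have hcond : Fin.castAdd m i1 < Fin.natAdd n j2 := by
          have := i1.isLt
          simp only [Fin.lt_def, Fin.coe_castAdd, Fin.coe_natAdd]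
          omega
        rw [if_pos hcond, htc, htn]
    have part2 : ∀ i2 : Fin m,
        (∏ j : Fin (n + m), if Fin.natAdd n i2 < j then t (Fin.natAdd n i2) - t j else 1)
        = ∏ j2 ∈ Finset.Ioi i2, (a i2 - a j2) := by
      intro i2
      rw [inner]
      have left1 : (∏ j1 : Fin n,
          if Fin.natAdd n i2 < Fin.castAdd m j1 then t (Fin.natAdd n i2) - t (Fin.castAdd m j1) else 1) = 1 := by
        refine Finset.prod_eq_one ?_
        intro j1 _
        rw [if_neg]
        have := j1.isLt
        simp only [Fin.lt_def, Fin.coe_castAdd, Fin.coe_natAdd]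
        omega
      rw [left1, one_mul]
      rw [hIoi m (fun j2 => a i2 - a j2) i2]
      refine Finset.prod_congr rfl ?_
      intro j2 _
      have hcond : (Fin.natAdd n i2 < Fin.natAdd n j2) ↔ (i2 < j2) := by
        simp only [Fin.lt_def, Fin.coe_natAdd]
        omega
      by_cases hij : i2 < j2
      · rw [if_pos (hcond.mpr hij), if_pos hij, htn, htn]
      · rw [if_neg (fun hc => hij (hcond.mp hc)), if_neg hij]
    rw [Finset.prod_congr rfl (fun i1 _ => part1 i1),
      Finset.prod_congr rfl (fun i2 _ => part2 i2)]
    rw [Finset.prod_mul_distrib]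
    ring
  exact key

end Step2

end SchurFact

open SchurFact in
/-- Factorization property: for partitions `I = (i₁,…,i_m)` and `J = (j₁,…,j_h)`
(weakly increasing) and alphabets `𝔸`, `𝔹` of `m`, `n` variables,
`S_{(j₁,…,j_h,i₁+n,…,i_m+n)}(𝔸−𝔹) = S_I(𝔸) · R(𝔸,𝔹) · S_J(−𝔹)`. -/
theorem stmt_12 (m n h : ℕ) (I : Fin m → ℕ) (J : Fin h → ℕ)
    (hI : Monotone I) (hJ : Monotone J) :
    schurAB
        ((Finset.univ : Finset (Fin m)).val.map
          (fun i => (X (Sum.inl i) : MvPolynomial (Fin m ⊕ Fin n) ℤ)))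
        ((Finset.univ : Finset (Fin n)).val.map (fun j => X (Sum.inr j)))
        (Fin.append J (fun i => I i + n)) =
      schurAB
          ((Finset.univ : Finset (Fin m)).val.map
            (fun i => (X (Sum.inl i) : MvPolynomial (Fin m ⊕ Fin n) ℤ)))
          (0 : Multiset (MvPolynomial (Fin m ⊕ Fin n) ℤ)) I *
        (∏ i : Fin m, ∏ j : Fin n,
          ((X (Sum.inl i) : MvPolynomial (Fin m ⊕ Fin n) ℤ) - X (Sum.inr j))) *
        schurAB (0 : Multiset (MvPolynomial (Fin m ⊕ Fin n) ℤ))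
          ((Finset.univ : Finset (Fin n)).val.map (fun j => X (Sum.inr j))) J := by
  classical
  set Rg := MvPolynomial (Fin m ⊕ Fin n) ℤ
  have hXne : ∀ (u v : Fin m ⊕ Fin n), u ≠ v → (X u : Rg) - X v ≠ 0 := by
    intro u v huv
    exact sub_ne_zero.mpr (fun hc => huv (MvPolynomial.X_injective hc))
  set a : Fin m → Rg := fun i => X (Sum.inl i) with ha
  set b : Fin n → Rg := fun j => X (Sum.inr j) with hb
  set A : Multiset Rg := Multiset.map a Finset.univ.val with hA
  set B : Multiset Rg := Multiset.map b Finset.univ.val with hB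
  have hcA : Multiset.card A = m := card_map_univ a
  have hcB : Multiset.card B = n := card_map_univ b
  -- step 1
  rw [step1 A B (le_of_eq hcA) (le_of_eq hcB) I J]
  -- step 2, identity X
  have h2 := step2X a b I
  rw [← hA, ← hB] at h2
  rw [← h2]
  -- determinant of Chat
  have hY := step2Y a b
  rw [prod_split a b] at hY
  have hPVb : (∏ i : Fin n, ∏ j ∈ Finset.Ioi i, (b i - b j)) ≠ 0 := by
    rw [Finset.prod_ne_zero_iff]
    intro i _
    rw [Finset.prod_ne_zero_iff]
    intro j hj
    have hij : i ≠ j := ne_of_lt (Finset.mem_Ioi.mp hj)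
    exact hXne _ _ (fun hc => hij (Sum.inr_injective hc))
  have hPVa : (∏ i : Fin m, ∏ j ∈ Finset.Ioi i, (a i - a j)) ≠ 0 := by
    rw [Finset.prod_ne_zero_iff]
    intro i _
    rw [Finset.prod_ne_zero_iff]
    intro j hj
    have hij : i ≠ j := ne_of_lt (Finset.mem_Ioi.mp hj)
    exact hXne _ _ (fun hc => hij (Sum.inl_injective hc))
  have hCROSS : (∏ s : Fin n, ∏ i : Fin m, (b s - a i)) ≠ 0 := by
    rw [Finset.prod_ne_zero_iff]
    intro s _
    rw [Finset.prod_ne_zero_iff]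
    intro i _
    exact hXne _ _ (by simp)
  have hdetChat : (Chat a b).det = ∏ s : Fin m, ∏ j : Fin n, (a s - b j) := by
    have hc0 : ((∏ i : Fin n, ∏ j ∈ Finset.Ioi i, (b i - b j))
        * ∏ i : Fin m, ∏ j ∈ Finset.Ioi i, (a i - a j))
        * (∏ s : Fin n, ∏ i : Fin m, (b s - a i)) ≠ 0 :=
      mul_ne_zero (mul_ne_zero hPVb hPVa) hCROSS
    apply mul_left_cancel₀ hc0
    rw [hY]
    ring
  rw [hdetChat]
  ring
end

section
/- In the ring of symmetric polynomials in two variables x₁, x₂, the Pieri rule gives h_{i−1}(𝔻)·3·h₁(x₁,x₂) = h_i(𝔻) + S_{1,i−1}(𝔻), where 𝔻 = {2x₁, 2x₂, x₁+x₂}; consequently, for 1 ≤ p ≤ q, the coefficient of the Schur polynomial s_{(q,p)}(x₁,x₂) in the expansion of S_{1,p+q−1}(𝔻) equals 2·⟨p,q⟩, where ⟨p,q⟩ is the coefficient of s_{(q,p)} in h_{p+q}(𝔻). -/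
open MvPolynomial

/-- The complete homogeneous symmetric polynomial of degree `i` in three quantities
`u, v, w`. -/
noncomputable def hThree (u v w : MvPolynomial (Fin 2) ℤ) (i : ℕ) : MvPolynomial (Fin 2) ℤ :=
  ∑ p ∈ Finset.Nat.antidiagonalTuple 3 i, u ^ p 0 * v ^ p 1 * w ^ p 2

/-- `h_i(𝔻)` where `𝔻 = {2x₁, 2x₂, x₁+x₂}`. -/
noncomputable def hD (i : ℕ) : MvPolynomial (Fin 2) ℤ :=
  hThree (2 * X 0) (2 * X 1) (X 0 + X 1) i

/-- `S_{1,i−1}(𝔻) = h₁(𝔻)·h_{i−1}(𝔻) − h_i(𝔻)`. -/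
noncomputable def sOneD (i : ℕ) : MvPolynomial (Fin 2) ℤ :=
  hD 1 * hD (i - 1) - hD i

/-- The complete homogeneous symmetric polynomial `h_m(x₁,x₂)` in two variables. -/
noncomputable def hTwo (m : ℕ) : MvPolynomial (Fin 2) ℤ :=
  ∑ t ∈ Finset.range (m + 1), X 0 ^ t * X 1 ^ (m - t)

/-- The Schur polynomial `s_{(q,p)}(x₁,x₂) = (x₁x₂)^p · h_{q−p}(x₁,x₂)`. -/
noncomputable def schurTwo (q p : ℕ) : MvPolynomial (Fin 2) ℤ :=
  (X 0 * X 1) ^ p * hTwo (q - p)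


lemma tupleSum {M : Type*} [AddCommMonoid M] (f : (Fin 3 → ℕ) → M) (n : ℕ) :
    ∑ t ∈ Finset.Nat.antidiagonalTuple 3 n, f t =
      ∑ ab ∈ Finset.HasAntidiagonal.antidiagonal n, ∑ cd ∈ Finset.HasAntidiagonal.antidiagonal ab.2,
        f ![ab.1, cd.1, cd.2] := by
  rw [Finset.sum_sigma' (Finset.HasAntidiagonal.antidiagonal n) (fun ab => Finset.HasAntidiagonal.antidiagonal ab.2) (fun ab cd => f ![ab.1, cd.1, cd.2])]
  apply Finset.sum_nbij' (i := fun t => ⟨(t 0, t 1 + t 2), (t 1, t 2)⟩)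
    (j := fun s => ![s.1.1, s.2.1, s.2.2])
  · intro t ht
    rw [Finset.Nat.mem_antidiagonalTuple] at ht
    simp [Finset.mem_sigma, Finset.mem_antidiagonal, ← ht, Fin.sum_univ_three, add_assoc]
  · rintro ⟨⟨a,b⟩,⟨c,d⟩⟩ hs
    simp only [Finset.mem_sigma, Finset.HasAntidiagonal.mem_antidiagonal] at hs
    rw [Finset.Nat.mem_antidiagonalTuple]
    simp [Fin.sum_univ_three]
    omega
  · intro t ht
    funext i
    fin_cases i <;> simp
  · rintro ⟨⟨a,b⟩,⟨c,d⟩⟩ hs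
    simp only [Finset.mem_sigma, Finset.HasAntidiagonal.mem_antidiagonal] at hs
    obtain ⟨h1, h2⟩ := hs
    subst h2
    simp
  · intro t ht
    congr 1
    funext i
    fin_cases i <;> simp

noncomputable def gD (b : ℕ) : MvPolynomial (Fin 2) ℤ :=
  ∑ cd ∈ Finset.HasAntidiagonal.antidiagonal b, (2 * X 1) ^ cd.1 * (X 0 + X 1) ^ cd.2

lemma hD_eq (n : ℕ) :
    hD n = ∑ ab ∈ Finset.HasAntidiagonal.antidiagonal n, (2 * X 0) ^ ab.1 * gD ab.2 := by
  unfold hD hThree gD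
  rw [tupleSum (fun t => (2 * X 0) ^ t 0 * (2 * X 1) ^ t 1 * (X 0 + X 1) ^ t 2) n]
  apply Finset.sum_congr rfl
  intro ab _
  rw [Finset.mul_sum]
  apply Finset.sum_congr rfl
  intro cd _
  simp [mul_assoc]

lemma gD_zero : gD 0 = 1 := by simp [gD]

lemma gD_succ (b : ℕ) :
    gD (b + 1) = (2 * X 1) ^ (b + 1) + (X 0 + X 1) * gD b := by
  unfold gD
  rw [Finset.Nat.antidiagonal_succ', Finset.sum_cons, Finset.sum_map, Finset.mul_sum]
  congr 1
  · simp
  · apply Finset.sum_congr rfl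
    intro cd _
    show (2 * X 1) ^ cd.1 * (X 0 + X 1) ^ (cd.2 + 1) = _
    ring

lemma hD_one : hD 1 = 3 * hTwo 1 := by
  rw [hD_eq, Finset.Nat.sum_antidiagonal_eq_sum_range_succ_mk]
  rw [Finset.sum_range_succ, Finset.sum_range_succ, Finset.sum_range_zero]
  simp only [Nat.sub_zero, Nat.sub_self, pow_zero, pow_one, one_mul, mul_one, zero_add]
  have g1 : gD 1 = (2 * X 1) ^ (0 + 1) + (X 0 + X 1) * gD 0 := gD_succ 0
  rw [g1, gD_zero, hTwo]
  rw [Finset.sum_range_succ, Finset.sum_range_succ, Finset.sum_range_zero]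
  simp only [Nat.sub_zero, Nat.sub_self, pow_zero, pow_one, one_mul, mul_one, zero_add]
  ring

lemma C_two_pow (m : ℕ) : (C ((2:ℤ)^m) : MvPolynomial (Fin 2) ℤ) = 2 ^ m := by
  rw [map_pow]
  norm_num

lemma sum_UV (m : ℕ) :
    ∑ ab ∈ Finset.HasAntidiagonal.antidiagonal m, (2 * X 0 : MvPolynomial (Fin 2) ℤ) ^ ab.1 * (2 * X 1) ^ ab.2
      = C ((2:ℤ)^m) * hTwo m := by
  rw [Finset.Nat.sum_antidiagonal_eq_sum_range_succ_mk, hTwo, Finset.mul_sum]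
  apply Finset.sum_congr rfl
  intro k hk
  simp only [Finset.mem_range] at hk
  have hkm : k + (m - k) = m := by omega
  have h2 : (2 : MvPolynomial (Fin 2) ℤ) ^ m = 2 ^ k * 2 ^ (m - k) := by
    rw [← pow_add, hkm]
  rw [mul_pow, mul_pow, C_two_pow, h2]
  ring

lemma hD_rec (n : ℕ) :
    hD (n + 1) = (X 0 + X 1) * hD n + C ((2:ℤ)^(n+1)) * hTwo (n+1) := by
  rw [hD_eq (n+1), Finset.Nat.antidiagonal_succ', Finset.sum_cons]
  rw [Finset.sum_map]
  have expand : ∀ cd ∈ Finset.HasAntidiagonal.antidiagonal n,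
      (2 * X 0 : MvPolynomial (Fin 2) ℤ) ^
          (((Function.Embedding.refl ℕ).prodMap ⟨Nat.succ, Nat.succ_injective⟩) cd).1 *
        gD (((Function.Embedding.refl ℕ).prodMap ⟨Nat.succ, Nat.succ_injective⟩) cd).2
      = (2 * X 0) ^ cd.1 * (2 * X 1) ^ (cd.2 + 1)
        + (X 0 + X 1) * ((2 * X 0) ^ cd.1 * gD cd.2) := by
    intro cd _
    show (2 * X 0 : MvPolynomial (Fin 2) ℤ) ^ cd.1 * gD (cd.2 + 1) = _
    rw [gD_succ]
    ring
  rw [Finset.sum_congr rfl expand, Finset.sum_add_distrib, ← Finset.mul_sum, ← hD_eq]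
  have key : (2 * X 0 : MvPolynomial (Fin 2) ℤ) ^ (n+1) * gD 0
      + ∑ cd ∈ Finset.HasAntidiagonal.antidiagonal n, (2 * X 0) ^ cd.1 * (2 * X 1) ^ (cd.2 + 1)
      = C ((2:ℤ)^(n+1)) * hTwo (n+1) := by
    rw [← sum_UV (n+1), Finset.Nat.antidiagonal_succ', Finset.sum_cons, Finset.sum_map, gD_zero]
    congr 1
  rw [← key]
  ring

noncomputable def mexp (i j : ℕ) : Fin 2 →₀ ℕ := Finsupp.single 0 i + Finsupp.single 1 j

lemma pair_eq {i j i' j' : ℕ} : mexp i j = mexp i' j' ↔ i = i' ∧ j = j' := by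
  constructor
  · intro h
    have h0 := DFunLike.congr_fun h 0
    have h1 := DFunLike.congr_fun h 1
    simp [mexp, Finsupp.single_apply] at h0 h1
    exact ⟨h0, h1⟩
  · rintro ⟨rfl, rfl⟩
    rfl

lemma XX (i j : ℕ) : (X 0 ^ i * X 1 ^ j : MvPolynomial (Fin 2) ℤ) = monomial (mexp i j) 1 := by
  rw [X_pow_eq_monomial, X_pow_eq_monomial, monomial_mul, one_mul, mexp]

lemma hTwo_one : hTwo 1 = X 0 + X 1 := by
  rw [hTwo, Finset.sum_range_succ, Finset.sum_range_succ, Finset.sum_range_zero]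
  simp
  ring

lemma coeff_hTwo (m i j : ℕ) (h : i + j = m) : coeff (mexp i j) (hTwo m) = 1 := by
  rw [hTwo]
  simp_rw [XX]
  rw [coeff_sum]
  simp_rw [coeff_monomial]
  rw [Finset.sum_eq_single_of_mem i (by simp; omega)]
  · rw [if_pos (pair_eq.mpr ⟨rfl, by omega⟩)]
  · intro b _ hbi
    rw [if_neg]
    intro hc
    exact hbi (pair_eq.mp hc).1

lemma coeff_schur (N b a : ℕ) (hb : 2 * b ≤ N) (ha : 2 * a ≤ N) :
    coeff (mexp (N - a) a) (schurTwo (N - b) b) = if b ≤ a then 1 else 0 := by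
  have hq : N - b - b = N - 2 * b := by omega
  rw [schurTwo, hq, hTwo, Finset.mul_sum]
  have hterm : ∀ t ∈ Finset.range (N - 2 * b + 1),
      (X 0 * X 1 : MvPolynomial (Fin 2) ℤ) ^ b * (X 0 ^ t * X 1 ^ (N - 2 * b - t))
        = monomial (mexp (b + t) (b + (N - 2 * b - t))) 1 := by
    intro t _
    rw [← XX, pow_add, pow_add, mul_pow]
    ring
  rw [Finset.sum_congr rfl hterm, coeff_sum]
  simp_rw [coeff_monomial]
  by_cases hba : b ≤ a
  · rw [if_pos hba]
    rw [Finset.sum_eq_single_of_mem (N - a - b) (by simp; omega)]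
    · rw [if_pos (pair_eq.mpr ⟨by omega, by omega⟩)]
    · intro t ht hti
      simp only [Finset.mem_range] at ht
      rw [if_neg]
      intro hc
      have := (pair_eq.mp hc).1
      omega
  · rw [if_neg hba]
    apply Finset.sum_eq_zero
    intro t ht
    simp only [Finset.mem_range] at ht
    rw [if_neg]
    intro hc
    have := (pair_eq.mp hc).2
    omega

lemma coeff_expansion (N : ℕ) (e : ℕ → ℤ) (a' : ℕ) (ha' : 2 * a' ≤ N) :
    coeff (mexp (N - a') a')
        (∑ a ∈ (Finset.range (N + 1)).filter (fun a => 2 * a ≤ N),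
          C (e a) * schurTwo (N - a) a)
      = ∑ a ∈ Finset.range (a' + 1), e a := by
  rw [coeff_sum]
  have hterm : ∀ a ∈ (Finset.range (N + 1)).filter (fun a => 2 * a ≤ N),
      coeff (mexp (N - a') a') (C (e a) * schurTwo (N - a) a)
        = if a ≤ a' then e a else 0 := by
    intro a hmem
    simp only [Finset.mem_filter, Finset.mem_range] at hmem
    rw [coeff_C_mul, coeff_schur N a a' hmem.2 ha']
    split <;> simp
  rw [Finset.sum_congr rfl hterm, Finset.sum_ite, Finset.sum_const_zero, add_zero]
  apply Finset.sum_congr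
  · ext x
    simp only [Finset.mem_filter, Finset.mem_range]
    omega
  · intros; rfl

/-- Pieri: `h_{i−1}(𝔻)·3·h₁(x₁,x₂) = h_i(𝔻) + S_{1,i−1}(𝔻)`; consequently, expanding in the
basis of Schur polynomials `s_{(q,p)}` of fixed degree `p+q`, the coefficient of `s_{(q,p)}` in
`S_{1,p+q−1}(𝔻)` is twice the coefficient `⟨p,q⟩` of `s_{(q,p)}` in `h_{p+q}(𝔻)`, for `1 ≤ p ≤ q`. -/
theorem stmt_13 :
    (∀ i : ℕ, 1 ≤ i →
      hD (i - 1) * (3 * hTwo 1) = hD i + sOneD i) ∧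
    (∀ (p q : ℕ) (c d : ℕ → ℤ), 1 ≤ p → p ≤ q →
      sOneD (p + q) =
        (∑ a ∈ (Finset.range (p + q + 1)).filter (fun a => 2 * a ≤ p + q),
          C (c a) * schurTwo (p + q - a) a) →
      hD (p + q) =
        (∑ a ∈ (Finset.range (p + q + 1)).filter (fun a => 2 * a ≤ p + q),
          C (d a) * schurTwo (p + q - a) a) →
      c p = 2 * d p) := by
  constructor
  · intro i _
    rw [sOneD, hD_one]
    ring
  · intro p q c d hp hpq hS hH
    set N := p + q with hNdef
    have hN2 : 2 ≤ N := by omega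
    have h2p : 2 * p ≤ N := by omega
    have h2p' : 2 * (p - 1) ≤ N := by omega
    -- key recurrence
    have hrec : hD N = (X 0 + X 1) * hD (N - 1) + C ((2:ℤ) ^ N) * hTwo N := by
      have h := hD_rec (N - 1)
      have hN1 : N - 1 + 1 = N := by omega
      rw [hN1] at h
      exact h
    have hs' : sOneD N = C (3:ℤ) * ((X 0 + X 1) * hD (N - 1)) - hD N := by
      rw [sOneD, hD_one, hTwo_one]
      have h3 : (C (3:ℤ) : MvPolynomial (Fin 2) ℤ) = 3 := by norm_num
      rw [h3]
      ring
    -- coefficient values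
    have key : ∀ a : ℕ, 2 * a ≤ N →
        coeff (mexp (N - a) a) (sOneD N)
          = 2 * coeff (mexp (N - a) a) (hD N) - 3 * 2 ^ N := by
      intro a ha
      have hT : coeff (mexp (N - a) a) (hD N)
          = coeff (mexp (N - a) a) ((X 0 + X 1) * hD (N - 1)) + 2 ^ N := by
        rw [hrec, coeff_add, coeff_C_mul, coeff_hTwo N (N - a) a (by omega), mul_one]
      rw [hs', coeff_sub, coeff_C_mul, hT]
      ring
    -- extract coefficients from the expansions
    have hc1 : coeff (mexp (N - p) p) (sOneD N) = ∑ a ∈ Finset.range (p + 1), c a := by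
      rw [hS]; exact coeff_expansion N c p h2p
    have hc2 : coeff (mexp (N - (p-1)) (p-1)) (sOneD N) = ∑ a ∈ Finset.range (p - 1 + 1), c a := by
      rw [hS]; exact coeff_expansion N c (p - 1) h2p'
    have hd1 : coeff (mexp (N - p) p) (hD N) = ∑ a ∈ Finset.range (p + 1), d a := by
      rw [hH]; exact coeff_expansion N d p h2p
    have hd2 : coeff (mexp (N - (p-1)) (p-1)) (hD N) = ∑ a ∈ Finset.range (p - 1 + 1), d a := by
      rw [hH]; exact coeff_expansion N d (p - 1) h2p'
    have hps : p - 1 + 1 = p := by omega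
    rw [hps] at hc2 hd2
    have hcp : c p = coeff (mexp (N - p) p) (sOneD N) - coeff (mexp (N - (p-1)) (p-1)) (sOneD N) := by
      rw [hc1, hc2, Finset.sum_range_succ]; ring
    have hdp : d p = coeff (mexp (N - p) p) (hD N) - coeff (mexp (N - (p-1)) (p-1)) (hD N) := by
      rw [hd1, hd2, Finset.sum_range_succ]; ring
    rw [hcp, hdp, key p h2p, key (p-1) h2p']
    ring
end
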